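/- arXiv:1609.07496 — 6 statements merged into one kernel-verified Lean document; each statement's English description precedes it below -/
import Mathlib

section
/- Let M_t(X) = e^{itθ + tL}(X) where θ(X) = -[H_eff, X] for a Hermitian matrix H_eff commuting with a positive definite density matrix Ω, L satisfies quantum detailed balance with respect to Ω, and θ and L commute as superoperators. Then the Petz recovery map of M_t with respect to Ω is M̃_t(X) = e^{-itθ + tL}(X); in particular M̃_t(M_t(X)) = e^{2tL}(X). -/
open Matrix
open scoped ComplexOrder

attribute [local instance] Matrix.frobeniusNormedAddCommGroup Matrix.frobeniusNormedSpace

instance matrixCLMIsTopologicalRing {d : ℕ} :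
    IsTopologicalRing (Matrix (Fin d) (Fin d) ℂ →L[ℂ] Matrix (Fin d) (Fin d) ℂ) :=
  @NonUnitalSeminormedRing.toIsTopologicalRing _
    (@ContinuousLinearMap.toNormedRing ℂ (Matrix (Fin d) (Fin d) ℂ)
      Matrix.frobeniusNormedAddCommGroup _ Matrix.frobeniusNormedSpace).toNonUnitalNormedRing.toNonUnitalSeminormedRing

set_option synthInstance.maxHeartbeats 1000000
set_option maxHeartbeats 8000000

namespace PetzAux

abbrev Mat (d : ℕ) := Matrix (Fin d) (Fin d) ℂ

variable {n : Type*} [Fintype n] [DecidableEq n] {A : Matrix n n ℂ}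

instance {d : ℕ} : IsScalarTower ℂ (Mat d →L[ℂ] Mat d) (Mat d →L[ℂ] Mat d) :=
  IsScalarTower.right (R := ℂ) (A := Mat d →L[ℂ] Mat d)

instance {d : ℕ} : SMulCommClass ℂ (Mat d →L[ℂ] Mat d) (Mat d →L[ℂ] Mat d) :=
  Algebra.to_smulCommClass (R := ℂ) (A := Mat d →L[ℂ] Mat d)

noncomputable instance matCLMNormedRing {d : ℕ} : NormedRing (Mat d →L[ℂ] Mat d) :=
  @ContinuousLinearMap.toNormedRing ℂ (Mat d) Matrix.frobeniusNormedAddCommGroup _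
    Matrix.frobeniusNormedSpace

noncomputable instance matCLMNormedAlgebra {d : ℕ} : NormedAlgebra ℂ (Mat d →L[ℂ] Mat d) :=
  @ContinuousLinearMap.toNormedAlgebra ℂ (Mat d) _ _ Matrix.frobeniusNormedSpace

noncomputable instance matCLMNormedAlgebraRat {d : ℕ} : NormedAlgebra ℚ (Mat d →L[ℂ] Mat d) :=
  NormedAlgebra.restrictScalars ℚ ℂ _

instance matCLMCompleteSpace {d : ℕ} : @CompleteSpace (Mat d →L[ℂ] Mat d)
    (@PseudoMetricSpace.toUniformSpace _ (@SeminormedRing.toPseudoMetricSpace _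
      (@NormedRing.toSeminormedRing _ matCLMNormedRing))) := by
  have hf : FiniteDimensional ℂ (Mat d →L[ℂ] Mat d) :=
    Module.Finite.equiv (LinearMap.toContinuousLinearMap (𝕜 := ℂ) (E := Mat d) (F' := Mat d))
  have hp := @FiniteDimensional.proper ℂ _ (Mat d →L[ℂ] Mat d) { (matCLMNormedRing (d := d)) with }
    (matCLMNormedAlgebra (d := d)).toNormedSpace _ hf
  exact @complete_of_proper _ _ hp

lemma cfc_mul_cfc' (hA : A.IsHermitian) (f g : ℝ → ℝ) :
    hA.cfc f * hA.cfc g = hA.cfc (fun x => f x * g x) := by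
  unfold Matrix.IsHermitian.cfc
  simp only [Unitary.conjStarAlgAut_apply]
  have hU : (star (hA.eigenvectorUnitary : Matrix n n ℂ)) * (hA.eigenvectorUnitary : Matrix n n ℂ) = 1 :=
    Unitary.coe_star_mul_self _
  calc (hA.eigenvectorUnitary : Matrix n n ℂ) * diagonal (RCLike.ofReal ∘ f ∘ hA.eigenvalues)
        * star (hA.eigenvectorUnitary : Matrix n n ℂ)
        * ((hA.eigenvectorUnitary : Matrix n n ℂ) * diagonal (RCLike.ofReal ∘ g ∘ hA.eigenvalues)
        * star (hA.eigenvectorUnitary : Matrix n n ℂ))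
      = (hA.eigenvectorUnitary : Matrix n n ℂ)
        * (diagonal (RCLike.ofReal ∘ f ∘ hA.eigenvalues)
          * ((star (hA.eigenvectorUnitary : Matrix n n ℂ)) * (hA.eigenvectorUnitary : Matrix n n ℂ))
          * diagonal (RCLike.ofReal ∘ g ∘ hA.eigenvalues))
        * star (hA.eigenvectorUnitary : Matrix n n ℂ) := by
        simp only [mul_assoc]
    _ = _ := by
        rw [hU, mul_one, diagonal_mul_diagonal]
        have : (fun i => (RCLike.ofReal ∘ f ∘ hA.eigenvalues) i * (RCLike.ofReal ∘ g ∘ hA.eigenvalues) i)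
            = (RCLike.ofReal ∘ (fun x => f x * g x) ∘ hA.eigenvalues : n → ℂ) := by
          funext i; simp
        rw [this]

lemma cfc_eq_one' (hA : A.IsHermitian) {f : ℝ → ℝ}
    (h : ∀ i, f (hA.eigenvalues i) = 1) : hA.cfc f = 1 := by
  unfold Matrix.IsHermitian.cfc
  simp only [Unitary.conjStarAlgAut_apply]
  have : diagonal (RCLike.ofReal ∘ f ∘ hA.eigenvalues) = (1 : Matrix n n ℂ) := by
    rw [← diagonal_one]
    have : (RCLike.ofReal ∘ f ∘ hA.eigenvalues : n → ℂ) = fun _ => 1 := by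
      funext i; simp [h i]
    rw [this]
  rw [this, mul_one]
  exact Unitary.coe_mul_star_self _

lemma commute_diag' {B : Matrix n n ℂ} {d1 d2 : n → ℂ}
    (h : B * diagonal d1 = diagonal d1 * B) (hd : ∀ i j, d1 i = d1 j → d2 i = d2 j) :
    B * diagonal d2 = diagonal d2 * B := by
  ext i j
  have h' : B i j * d1 j = d1 i * B i j := by
    have := congrFun (congrFun h i) j
    rwa [mul_diagonal, diagonal_mul] at this
  rw [mul_diagonal, diagonal_mul]
  by_cases hB : B i j = 0
  · simp [hB]
  · have : d1 j = d1 i := by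
      have := h'.symm.trans (mul_comm _ _)
      exact mul_right_cancel₀ hB this |>.symm
    rw [hd j i this, mul_comm]

lemma commute_cfc' (hA : A.IsHermitian) {B : Matrix n n ℂ}
    (h : B * A = A * B) (f : ℝ → ℝ) : B * hA.cfc f = hA.cfc f * B := by
  set U : Matrix n n ℂ := (hA.eigenvectorUnitary : Matrix n n ℂ) with hUdef
  have hU1 : star U * U = 1 := Unitary.coe_star_mul_self _
  have hU2 : U * star U = 1 := Unitary.coe_mul_star_self _
  set C : Matrix n n ℂ := star U * B * U with hC
  have hBC : B = U * C * star U := by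
    rw [hC]
    calc B = (U * star U) * B * (U * star U) := by rw [hU2]; simp
      _ = U * (star U * B * U) * star U := by simp only [mul_assoc]
  have hcd : C * diagonal (RCLike.ofReal ∘ hA.eigenvalues)
      = diagonal (RCLike.ofReal ∘ hA.eigenvalues) * C := by
    have hAeq := hA.spectral_theorem
    rw [Unitary.conjStarAlgAut_apply] at hAeq
    have h2 : B * (U * diagonal (RCLike.ofReal ∘ hA.eigenvalues) * star U)
        = (U * diagonal (RCLike.ofReal ∘ hA.eigenvalues) * star U) * B := by
      rw [← hAeq]; exact h
    calc C * diagonal (RCLike.ofReal ∘ hA.eigenvalues)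
        = star U * (B * (U * diagonal (RCLike.ofReal ∘ hA.eigenvalues) * star U)) * U := by
          rw [hC]; simp only [mul_assoc, hU1, mul_one, one_mul]
      _ = star U * ((U * diagonal (RCLike.ofReal ∘ hA.eigenvalues) * star U) * B) * U := by rw [h2]
      _ = diagonal (RCLike.ofReal ∘ hA.eigenvalues) * C := by
          rw [hC]; simp only [← mul_assoc, hU1, one_mul]
  have hcd2 : C * diagonal (RCLike.ofReal ∘ f ∘ hA.eigenvalues)
      = diagonal (RCLike.ofReal ∘ f ∘ hA.eigenvalues) * C := by
    refine commute_diag' hcd fun i j hij => ?_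
    have : hA.eigenvalues i = hA.eigenvalues j := by
      have := hij
      simp only [Function.comp_apply] at this
      exact_mod_cast this
    simp [Function.comp, this]
  unfold Matrix.IsHermitian.cfc
  simp only [Unitary.conjStarAlgAut_apply]
  rw [hBC]
  calc (U * C * star U) * (U * diagonal (RCLike.ofReal ∘ f ∘ hA.eigenvalues) * star U)
      = U * (C * (star U * U) * diagonal (RCLike.ofReal ∘ f ∘ hA.eigenvalues)) * star U := by
        simp only [mul_assoc]
    _ = U * (diagonal (RCLike.ofReal ∘ f ∘ hA.eigenvalues) * (star U * U) * C) * star U := by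
        rw [hU1, mul_one, mul_one, hcd2]
    _ = (U * diagonal (RCLike.ofReal ∘ f ∘ hA.eigenvalues) * star U) * (U * C * star U) := by
        simp only [mul_assoc, ← mul_assoc (star U) U, hU1, one_mul, mul_one]

variable {d : ℕ}

lemma trace_zero_of {C : Mat d} (h : (Cᴴ * C).trace = 0) : C = 0 := by
  have h2 : ∑ i, ∑ j, ((Complex.normSq (C j i) : ℝ) : ℂ) = 0 := by
    rw [← h, Matrix.trace]
    simp only [Matrix.diag_apply, Matrix.mul_apply, Matrix.conjTranspose_apply]
    congr 1; funext i; congr 1; funext j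
    rw [RCLike.star_def, ← Complex.normSq_eq_conj_mul_self]
  have h3 : ∑ i, ∑ j, Complex.normSq (C j i) = 0 := by exact_mod_cast h2
  ext i j
  have := (Finset.sum_eq_zero_iff_of_nonneg (fun _ _ => Finset.sum_nonneg
    (fun _ _ => Complex.normSq_nonneg _))).mp h3 j (Finset.mem_univ _)
  have := (Finset.sum_eq_zero_iff_of_nonneg (fun _ _ => Complex.normSq_nonneg _)).mp this i
    (Finset.mem_univ _)
  simpa using Complex.normSq_eq_zero.mp this

lemma trace_conj_swap (X B : Mat d) : (Xᴴ * B).trace = star ((Bᴴ * X).trace) := by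
  rw [← Matrix.trace_conjTranspose, Matrix.conjTranspose_mul, Matrix.conjTranspose_conjTranspose]

noncomputable def pairF (A B : Mat d) : (Mat d →L[ℂ] Mat d) →L[ℂ] ℂ :=
  LinearMap.toContinuousLinearMap
  { toFun := fun T => (Aᴴ * T B).trace
    map_add' := by intros; simp [Matrix.mul_add]
    map_smul' := by intros; simp [Matrix.mul_smul] }

lemma pairF_apply (A B : Mat d) (T : Mat d →L[ℂ] Mat d) :
    pairF A B T = (Aᴴ * T B).trace := rfl

lemma pair_smul {Φ Ψ : Mat d →L[ℂ] Mat d}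
    (h : ∀ A B, (Aᴴ * Φ B).trace = ((Ψ A)ᴴ * B).trace) (t : ℝ) :
    ∀ A B, (Aᴴ * (t • Φ) B).trace = (((t • Ψ) A)ᴴ * B).trace := by
  intro A B
  have h1 : (t • Φ) B = (t : ℂ) • Φ B := by
    rw [ContinuousLinearMap.smul_apply]
    exact RCLike.real_smul_eq_coe_smul (K := ℂ) t (Φ B)
  have h2 : (t • Ψ) A = (t : ℂ) • Ψ A := by
    rw [ContinuousLinearMap.smul_apply]
    exact RCLike.real_smul_eq_coe_smul (K := ℂ) t (Ψ A)
  rw [h1, h2, Matrix.mul_smul, Matrix.conjTranspose_smul, Matrix.smul_mul, Matrix.trace_smul,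
    Matrix.trace_smul, h A B]
  congr 1
  simp

lemma pair_exp {Φ Ψ : Mat d →L[ℂ] Mat d}
    (h : ∀ A B, (Aᴴ * Φ B).trace = ((Ψ A)ᴴ * B).trace) (A B : Mat d) :
    (Aᴴ * (NormedSpace.exp Φ) B).trace = (((NormedSpace.exp Ψ) A)ᴴ * B).trace := by
  have hpow : ∀ (n : ℕ) (A B : Mat d), (Aᴴ * (Φ ^ n) B).trace = (((Ψ ^ n) A)ᴴ * B).trace := by
    intro n
    induction n with
    | zero => intro A B; simp
    | succ n ih =>
      intro A B
      rw [pow_succ, pow_succ']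
      calc (Aᴴ * (Φ ^ n * Φ) B).trace = (Aᴴ * (Φ ^ n) (Φ B)).trace := rfl
        _ = (((Ψ ^ n) A)ᴴ * Φ B).trace := ih A (Φ B)
        _ = ((Ψ ((Ψ ^ n) A))ᴴ * B).trace := h _ B
        _ = (((Ψ * Ψ ^ n) A)ᴴ * B).trace := rfl
  rw [NormedSpace.exp_eq_tsum ℂ]
  have hsum : ∀ (T : Mat d →L[ℂ] Mat d),
      Summable fun n : ℕ => ((n.factorial : ℂ))⁻¹ • T ^ n :=
    fun T => NormedSpace.expSeries_summable' T
  have lhs_eq : (Aᴴ * (∑' n : ℕ, ((n.factorial : ℂ))⁻¹ • Φ ^ n) B).trace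
      = ∑' n : ℕ, ((n.factorial : ℂ))⁻¹ * (Aᴴ * (Φ ^ n) B).trace := by
    rw [← pairF_apply, (pairF A B).map_tsum (hsum Φ)]
    exact tsum_congr fun n => by
      rw [_root_.map_smul, pairF_apply, smul_eq_mul]
  have rhs_eq : ((((∑' n : ℕ, ((n.factorial : ℂ))⁻¹ • Ψ ^ n) A)ᴴ * B).trace)
      = ∑' n : ℕ, ((n.factorial : ℂ))⁻¹ * (((Ψ ^ n) A)ᴴ * B).trace := by
    rw [trace_conj_swap, ← pairF_apply, (pairF B A).map_tsum (hsum Ψ), tsum_star]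
    refine tsum_congr fun n => ?_
    rw [_root_.map_smul, pairF_apply, smul_eq_mul, star_mul']
    have h1 : star ((((n.factorial : ℂ)))⁻¹) = ((n.factorial : ℂ))⁻¹ := by
      simp [star_inv₀]
    rw [h1, ← trace_conj_swap]
  rw [lhs_eq, rhs_eq]
  exact tsum_congr fun n => by rw [hpow n A B]

/-- The sandwich map `X ↦ P * X * Q` as a continuous linear map. -/
noncomputable def sandwich (P Q : Mat d) : Mat d →L[ℂ] Mat d :=
  LinearMap.toContinuousLinearMap
  { toFun := fun X => P * X * Q
    map_add' := by intros; simp [Matrix.mul_add, Matrix.add_mul]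
    map_smul' := by intros; simp [Matrix.mul_smul, Matrix.smul_mul] }

lemma sandwich_apply (P Q X : Mat d) : sandwich P Q X = P * X * Q := rfl

end PetzAux

open PetzAux

/-- For `M_t = e^{itθ + tL}` with `θ(X) = -[H_eff, X]`, `H_eff` Hermitian and commuting with
the positive definite fixed point `Ω`, `L` satisfying quantum detailed balance w.r.t. `Ω`,
and `θ∘L = L∘θ`, the Petz recovery map of `M_t` with reference state `Ω` is
`M̃_t = e^{-itθ + tL}`; in particular `M̃_t(M_t(X)) = e^{2tL}(X)`. -/
theorem petz_recovery_with_unitary_part {d : ℕ}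
    (Ω Heff : Matrix (Fin d) (Fin d) ℂ) (hΩ : Ω.PosDef) (hΩtr : Ω.trace = 1)
    (hH : Heff.IsHermitian) (hcommΩ : Heff * Ω = Ω * Heff)
    (θ L Ldag : Matrix (Fin d) (Fin d) ℂ →L[ℂ] Matrix (Fin d) (Fin d) ℂ)
    (hθ : ∀ X, θ X = -(Heff * X - X * Heff))
    (hadj : ∀ A B, (Aᴴ * L B).trace = ((Ldag A)ᴴ * B).trace)
    (hfix : L Ω = 0)
    (hQDB : ∀ X, L X = hΩ.1.cfc Real.sqrt
        * Ldag ((hΩ.1.cfc fun x => (Real.sqrt x)⁻¹) * X * (hΩ.1.cfc fun x => (Real.sqrt x)⁻¹))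
        * hΩ.1.cfc Real.sqrt)
    (hcomm : ∀ X, θ (L X) = L (θ X))
    -- `Mdag t` is the Hilbert–Schmidt adjoint of `M_t = e^{itθ + tL}`
    (Mdag : ℝ → Matrix (Fin d) (Fin d) ℂ →L[ℂ] Matrix (Fin d) (Fin d) ℂ)
    (hMdag : ∀ (t : ℝ) A B,
      (Aᴴ * (NormedSpace.exp (t • (Complex.I • θ + L))) B).trace
        = ((Mdag t A)ᴴ * B).trace) :
    ∀ (t : ℝ) (X),
      (hΩ.1.cfc Real.sqrt
          * Mdag t ((hΩ.1.cfc fun x => (Real.sqrt x)⁻¹) * X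
              * (hΩ.1.cfc fun x => (Real.sqrt x)⁻¹))
          * hΩ.1.cfc Real.sqrt
        = (NormedSpace.exp (t • ((-Complex.I) • θ + L))) X)
      ∧ (NormedSpace.exp (t • ((-Complex.I) • θ + L)))
            ((NormedSpace.exp (t • (Complex.I • θ + L))) X)
          = (NormedSpace.exp ((2 * t) • L)) X := by
  intro t X
  set R : Mat d := hΩ.1.cfc Real.sqrt with hRdef
  set Rin : Mat d := hΩ.1.cfc fun x => (Real.sqrt x)⁻¹ with hRindef
  -- basic facts about R and Rin
  have hRRin : R * Rin = 1 := by
    rw [hRdef, hRindef, cfc_mul_cfc']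
    exact cfc_eq_one' hΩ.1 fun i =>
      mul_inv_cancel₀ (Real.sqrt_pos.mpr (hΩ.eigenvalues_pos i)).ne'
  have hRinR : Rin * R = 1 := by
    rw [hRdef, hRindef, cfc_mul_cfc']
    exact cfc_eq_one' hΩ.1 fun i =>
      inv_mul_cancel₀ (Real.sqrt_pos.mpr (hΩ.eigenvalues_pos i)).ne'
  have hHR : Heff * R = R * Heff := commute_cfc' hΩ.1 hcommΩ _
  have hHRin : Heff * Rin = Rin * Heff := commute_cfc' hΩ.1 hcommΩ _
  -- the pairing between `iθ + L` and `-iθ + Ldag`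
  have hθpair : ∀ A B : Mat d, (Aᴴ * θ B).trace = ((θ A)ᴴ * B).trace := by
    intro A B
    rw [hθ, hθ]
    have hHA : (-(Heff * A - A * Heff))ᴴ = -(Aᴴ * Heff - Heff * Aᴴ) := by
      simp [Matrix.conjTranspose_mul, hH.eq]
    rw [hHA]
    simp only [Matrix.mul_neg, Matrix.neg_mul, Matrix.mul_sub, Matrix.sub_mul,
      Matrix.trace_neg, Matrix.trace_sub, ← mul_assoc]
    rw [Matrix.trace_mul_cycle Aᴴ B Heff]
  have hpair : ∀ A B : Mat d, (Aᴴ * (Complex.I • θ + L) B).trace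
      = ((((-Complex.I) • θ + Ldag) A)ᴴ * B).trace := by
    intro A B
    simp only [ContinuousLinearMap.add_apply, ContinuousLinearMap.smul_apply,
      Matrix.mul_add, Matrix.trace_add, Matrix.conjTranspose_add, Matrix.add_mul]
    congr 1
    · rw [Matrix.mul_smul, Matrix.trace_smul, Matrix.conjTranspose_smul, Matrix.smul_mul,
        Matrix.trace_smul, hθpair]
      congr 1
      simp
    · exact hadj A B
  -- identify Mdag t with the exponential of the adjoint generator
  have hMt : Mdag t = NormedSpace.exp (t • ((-Complex.I) • θ + Ldag)) := by
    refine ContinuousLinearMap.ext fun A => ?_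
    have key : ∀ B, ((Mdag t A)ᴴ * B).trace
        = (((NormedSpace.exp (t • ((-Complex.I) • θ + Ldag))) A)ᴴ * B).trace := by
      intro B
      rw [← hMdag t A B]
      exact pair_exp (pair_smul hpair t) A B
    set C : Mat d := Mdag t A - (NormedSpace.exp (t • ((-Complex.I) • θ + Ldag))) A with hCdef
    have hC0 : (Cᴴ * C).trace = 0 := by
      rw [hCdef, Matrix.conjTranspose_sub, Matrix.sub_mul, Matrix.trace_sub, key C, sub_self]
    have := trace_zero_of hC0
    rw [hCdef, sub_eq_zero] at this
    exact this
  -- the sandwich maps as a unit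
  set J : Mat d →L[ℂ] Mat d := sandwich R R with hJdef
  set Jin : Mat d →L[ℂ] Mat d := sandwich Rin Rin with hJindef
  have hJJin : J * Jin = 1 := by
    refine ContinuousLinearMap.ext fun Y => ?_
    show R * (Rin * Y * Rin) * R = Y
    have : R * (Rin * Y * Rin) * R = (R * Rin) * Y * (Rin * R) := by noncomm_ring
    rw [this, hRRin, hRinR, one_mul, mul_one]
  have hJinJ : Jin * J = 1 := by
    refine ContinuousLinearMap.ext fun Y => ?_
    show Rin * (R * Y * R) * Rin = Y
    have : Rin * (R * Y * R) * Rin = (Rin * R) * Y * (R * Rin) := by noncomm_ring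
    rw [this, hRRin, hRinR, one_mul, mul_one]
  set u : (Mat d →L[ℂ] Mat d)ˣ := ⟨J, Jin, hJJin, hJinJ⟩ with hudef
  -- conjugation identity
  have hconj : (u : Mat d →L[ℂ] Mat d) * (t • ((-Complex.I) • θ + Ldag)) * (↑u⁻¹ : Mat d →L[ℂ] Mat d)
      = t • ((-Complex.I) • θ + L) := by
    refine ContinuousLinearMap.ext fun Y => ?_
    show J ((t • ((-Complex.I) • θ + Ldag)) (Jin Y)) = (t • ((-Complex.I) • θ + L)) Y
    have hJinY : Jin Y = Rin * Y * Rin := rfl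
    rw [ContinuousLinearMap.smul_apply, ContinuousLinearMap.smul_apply,
      ContinuousLinearMap.map_smul_of_tower]
    congr 1
    show R * (((-Complex.I) • θ + Ldag) (Rin * Y * Rin)) * R = ((-Complex.I) • θ + L) Y
    rw [ContinuousLinearMap.add_apply, ContinuousLinearMap.add_apply,
      ContinuousLinearMap.smul_apply, ContinuousLinearMap.smul_apply]
    have h2 : R * Ldag (Rin * Y * Rin) * R = L Y := (hQDB Y).symm
    have e1 : R * (Heff * (Rin * Y * Rin)) * R = Heff * Y := by
      calc R * (Heff * (Rin * Y * Rin)) * R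
          = (R * Heff * Rin) * Y * (Rin * R) := by simp only [mul_assoc]
        _ = (R * Heff * Rin) * Y := by rw [hRinR, mul_one]
        _ = Heff * Y := by rw [← hHR, mul_assoc Heff R Rin, hRRin, mul_one]
    have e2 : R * ((Rin * Y * Rin) * Heff) * R = Y * Heff := by
      calc R * ((Rin * Y * Rin) * Heff) * R
          = (R * Rin) * (Y * (Rin * Heff * R)) := by simp only [mul_assoc]
        _ = Y * (Rin * Heff * R) := by rw [hRRin, one_mul]
        _ = Y * Heff := by rw [← hHRin, mul_assoc Heff Rin R, hRinR, mul_one]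
    have h1 : R * (θ (Rin * Y * Rin)) * R = θ Y := by
      rw [hθ, hθ, Matrix.mul_neg, Matrix.neg_mul, Matrix.mul_sub, Matrix.sub_mul, e1, e2]
    rw [Matrix.mul_add, Matrix.add_mul, Matrix.mul_smul, Matrix.smul_mul, h1, h2]
  -- exponential of the conjugated generator
  have hexp1 : NormedSpace.exp (t • ((-Complex.I) • θ + L))
      = (u : Mat d →L[ℂ] Mat d) * NormedSpace.exp (t • ((-Complex.I) • θ + Ldag))
        * (↑u⁻¹ : Mat d →L[ℂ] Mat d) := by
    have h := NormedSpace.exp_units_conj (𝔸 := Mat d →L[ℂ] Mat d) u (t • ((-Complex.I) • θ + Ldag))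
    exact (congrArg NormedSpace.exp hconj).symm.trans h
  constructor
  · -- Petz recovery map
    rw [hexp1, hMt]
    have : ((u : Mat d →L[ℂ] Mat d) * NormedSpace.exp (t • ((-Complex.I) • θ + Ldag))
        * (↑u⁻¹ : Mat d →L[ℂ] Mat d)) X
        = R * (NormedSpace.exp (t • ((-Complex.I) • θ + Ldag))) (Rin * X * Rin) * R := rfl
    rw [this]
  · -- composition identity
    have hθL : θ * L = L * θ := ContinuousLinearMap.ext fun Z => hcomm Z
    have hsm : ∀ (s : ℝ) (T : Mat d →L[ℂ] Mat d), s • T = ((s : ℂ)) • T := fun s T =>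
      RCLike.real_smul_eq_coe_smul (K := ℂ) s T
    have hab : Commute ((-Complex.I) • θ + L) (Complex.I • θ + L) := by
      unfold Commute SemiconjBy
      simp only [add_mul, mul_add, smul_mul_assoc, mul_smul_comm, hθL]
      module
    have hab2 : Commute ((t : ℂ) • ((-Complex.I) • θ + L)) ((t : ℂ) • (Complex.I • θ + L)) :=
      (hab.smul_left _).smul_right _
    have hsum : ((t : ℂ) • ((-Complex.I) • θ + L)) + ((t : ℂ) • (Complex.I • θ + L))
        = (((2 * t : ℝ) : ℂ)) • L := by
      push_cast
      module
    rw [hsm t, hsm t, hsm (2 * t)]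
    rw [← hsum]
    have h := NormedSpace.exp_add_of_commute (𝔸 := Mat d →L[ℂ] Mat d) hab2
    exact (congrArg (fun T => T X) h).symm
end

section
/- Consider the classical two-state (qubit diagonal) Davies evolution p(t) = q + (p(0) − q)e^{−At} with A > 0, 0 < q < 1, 0 < p(0) < 1, corresponding to a thermal fixed point (q, 1−q). Define the classical relative entropy d(p‖r) = p log(p/r) + (1−p)log((1−p)/(1−r)) and g(t,k) = d(p(0)‖q) − d(p(t)‖q) − d(p(0)‖p(kt)). Then with x = e^{−At}, as x → 0: g = (p(0)−q)²/(q(1−q)) · (x^k − x²/2) + O(x³). In particular, for every k > 2 there exists t₀ such that g(t,k) < 0 for all t > t₀, while for k = 2, g(t,2) > 0 for all sufficiently large t (assuming p(0) ≠ q). -/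
open Filter
open scoped Topology

/-- Binary Kullback–Leibler divergence. -/
noncomputable def dKL (p r : ℝ) : ℝ :=
  p * Real.log (p / r) + (1 - p) * Real.log ((1 - p) / (1 - r))

lemma log2_bound {u : ℝ} (h : |u| ≤ 1/2) : |Real.log (1+u) - u| ≤ 2 * u^2 := by
  have h1 : |(-u)| < 1 := by rw [abs_neg]; linarith [abs_nonneg u]
  have H := Real.abs_log_sub_add_sum_range_le h1 1
  simp [Finset.sum_range_one] at H
  have e : Real.log (1+u) - u = -u + Real.log (1 + u) := by ring
  rw [e]
  refine H.trans ?_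
  rw [div_le_iff₀ (by linarith [abs_nonneg u])]
  nlinarith [abs_nonneg u, sq_nonneg u, sq_abs u]

lemma log3_bound {u : ℝ} (h : |u| ≤ 1/2) :
    |Real.log (1+u) - u + u^2/2| ≤ 2 * |u|^3 := by
  have h1 : |(-u)| < 1 := by rw [abs_neg]; linarith [abs_nonneg u]
  have H := Real.abs_log_sub_add_sum_range_le h1 2
  simp [Finset.sum_range_succ, Finset.sum_range_one] at H
  have e : Real.log (1+u) - u + u^2/2 = -u + u^2/(1+1) + Real.log (1 + u) := by ring
  rw [e]
  refine H.trans ?_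
  rw [div_le_iff₀ (by linarith [abs_nonneg u])]
  nlinarith [abs_nonneg u, pow_nonneg (abs_nonneg u) 3]

lemma xlog_bound {s : ℝ} (h : |s| ≤ 1/2) :
    |(1+s) * Real.log (1+s) - s - s^2/2| ≤ 4 * |s|^3 := by
  have H := log3_bound h
  have e : (1+s) * Real.log (1+s) - s - s^2/2
      = (1+s) * (Real.log (1+s) - s + s^2/2) - s^3/2 := by ring
  rw [e]
  have hs1 : |1 + s| ≤ 3/2 := by
    rw [abs_le] at *; constructor <;> linarith [h.1, h.2]
  have h3 : |s^3| = |s|^3 := abs_pow s 3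
  calc |(1+s) * (Real.log (1+s) - s + s^2/2) - s^3/2|
      ≤ |(1+s) * (Real.log (1+s) - s + s^2/2)| + |s^3/2| := abs_sub _ _
    _ = |1+s| * |Real.log (1+s) - s + s^2/2| + |s^3|/2 := by
        rw [abs_mul, abs_div]; norm_num
    _ ≤ (3/2) * (2*|s|^3) + |s|^3/2 := by
        refine add_le_add (mul_le_mul hs1 H (abs_nonneg _) (by norm_num)) ?_
        rw [h3]
    _ ≤ 4 * |s|^3 := by nlinarith [pow_nonneg (abs_nonneg s) 3]

lemma phi_bound {q u : ℝ} (hq0 : 0 < q) (hq1 : q < 1)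
    (h1 : |u| ≤ q/2) (h2 : |u| ≤ (1-q)/2) :
    |dKL (q+u) q - u^2/(2*(q*(1-q)))| ≤ (4/q^2 + 4/(1-q)^2) * |u|^3 := by
  have hq1' : 0 < 1 - q := by linarith
  have hqne : q ≠ 0 := ne_of_gt hq0
  have hq1ne : 1 - q ≠ 0 := ne_of_gt hq1'
  have haq : |u/q| ≤ 1/2 := by
    rw [abs_div, abs_of_pos hq0, div_le_iff₀ hq0]; linarith
  have hsq : |(-(u/(1-q)))| ≤ 1/2 := by
    rw [abs_neg, abs_div, abs_of_pos hq1', div_le_iff₀ hq1']; linarith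
  have e1 : (q+u)/q = 1 + u/q := by field_simp
  have e2 : (1-(q+u))/(1-q) = 1 + -(u/(1-q)) := by field_simp; ring
  have decomp : dKL (q+u) q - u^2/(2*(q*(1-q)))
      = q*((1+u/q)*Real.log (1+u/q) - u/q - (u/q)^2/2)
        + (1-q)*((1+ -(u/(1-q)))*Real.log (1+ -(u/(1-q)))
            - (-(u/(1-q))) - (-(u/(1-q)))^2/2) := by
    unfold dKL
    rw [e1, e2]
    generalize Real.log (1 + u/q) = L1
    generalize Real.log (1 + -(u/(1-q))) = L2
    field_simp
    ring
  have E1 := xlog_bound haq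
  have E2 := xlog_bound hsq
  have ha3 : |u/q|^3 = |u|^3/q^3 := by
    rw [abs_div, abs_of_pos hq0, div_pow]
  have hs3 : |(-(u/(1-q)))|^3 = |u|^3/(1-q)^3 := by
    rw [abs_neg, abs_div, abs_of_pos hq1', div_pow]
  rw [decomp]
  calc |q*((1+u/q)*Real.log (1+u/q) - u/q - (u/q)^2/2)
        + (1-q)*((1+ -(u/(1-q)))*Real.log (1+ -(u/(1-q)))
            - (-(u/(1-q))) - (-(u/(1-q)))^2/2)|
      ≤ q*|(1+u/q)*Real.log (1+u/q) - u/q - (u/q)^2/2|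
        + (1-q)*|(1+ -(u/(1-q)))*Real.log (1+ -(u/(1-q)))
            - (-(u/(1-q))) - (-(u/(1-q)))^2/2| := by
        refine (abs_add_le _ _).trans ?_
        rw [abs_mul, abs_mul, abs_of_pos hq0, abs_of_pos hq1']
    _ ≤ q*(4*|u/q|^3) + (1-q)*(4*|(-(u/(1-q)))|^3) :=
        add_le_add (by nlinarith) (by nlinarith)
    _ = (4/q^2 + 4/(1-q)^2) * |u|^3 := by
        rw [ha3, hs3]; field_simp

lemma psi_bound {q p0 u : ℝ} (hq0 : 0 < q) (hq1 : q < 1) (hp0 : 0 < p0) (hp1 : p0 < 1)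
    (h1 : |u| ≤ q/2) (h2 : |u| ≤ (1-q)/2) :
    |p0 * Real.log ((q+u)/q) + (1-p0) * Real.log ((1-(q+u))/(1-q)) - u*(p0-q)/(q*(1-q))|
      ≤ (2*p0/q^2 + 2*(1-p0)/(1-q)^2) * u^2 := by
  have hq1' : 0 < 1 - q := by linarith
  have hqne : q ≠ 0 := ne_of_gt hq0
  have hq1ne : 1 - q ≠ 0 := ne_of_gt hq1'
  have haq : |u/q| ≤ 1/2 := by
    rw [abs_div, abs_of_pos hq0, div_le_iff₀ hq0]; linarith
  have hsq : |(-(u/(1-q)))| ≤ 1/2 := by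
    rw [abs_neg, abs_div, abs_of_pos hq1', div_le_iff₀ hq1']; linarith
  have e1 : (q+u)/q = 1 + u/q := by field_simp
  have e2 : (1-(q+u))/(1-q) = 1 + -(u/(1-q)) := by field_simp; ring
  have decomp : p0 * Real.log ((q+u)/q) + (1-p0) * Real.log ((1-(q+u))/(1-q))
        - u*(p0-q)/(q*(1-q))
      = p0*(Real.log (1+u/q) - u/q)
        + (1-p0)*(Real.log (1+ -(u/(1-q))) - (-(u/(1-q)))) := by
    rw [e1, e2]
    generalize Real.log (1 + u/q) = L1
    generalize Real.log (1 + -(u/(1-q))) = L2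
    field_simp
    ring
  have E1 := log2_bound haq
  have E2 := log2_bound hsq
  have ha2 : (u/q)^2 = u^2/q^2 := by rw [div_pow]
  have hs2 : (-(u/(1-q)))^2 = u^2/(1-q)^2 := by rw [neg_pow, div_pow]; ring
  rw [decomp]
  calc |p0*(Real.log (1+u/q) - u/q)
        + (1-p0)*(Real.log (1+ -(u/(1-q))) - (-(u/(1-q))))|
      ≤ p0*|Real.log (1+u/q) - u/q|
        + (1-p0)*|Real.log (1+ -(u/(1-q))) - (-(u/(1-q)))| := by
        refine (abs_add_le _ _).trans ?_
        rw [abs_mul, abs_mul, abs_of_pos hp0, abs_of_pos (by linarith : (0:ℝ) < 1-p0)]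
    _ ≤ p0*(2*(u/q)^2) + (1-p0)*(2*(-(u/(1-q)))^2) :=
        add_le_add (by nlinarith) (by nlinarith)
    _ = (2*p0/q^2 + 2*(1-p0)/(1-q)^2) * u^2 := by
        rw [ha2, hs2]; field_simp

lemma dKL_diff {p0 q r : ℝ} (hp0 : 0 < p0) (hp1 : p0 < 1)
    (hq0 : 0 < q) (hq1 : q < 1) (hr0 : 0 < r) (hr1 : r < 1) :
    dKL p0 q - dKL p0 r = p0 * Real.log (r/q) + (1-p0) * Real.log ((1-r)/(1-q)) := by
  have h1 : (0:ℝ) < 1 - p0 := by linarith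
  have h2 : (0:ℝ) < 1 - q := by linarith
  have h3 : (0:ℝ) < 1 - r := by linarith
  unfold dKL
  rw [Real.log_div (ne_of_gt hp0) (ne_of_gt hq0),
      Real.log_div (ne_of_gt hp0) (ne_of_gt hr0),
      Real.log_div (ne_of_gt h1) (ne_of_gt h2),
      Real.log_div (ne_of_gt h1) (ne_of_gt h3),
      Real.log_div (ne_of_gt hr0) (ne_of_gt hq0),
      Real.log_div (ne_of_gt h3) (ne_of_gt h2)]
  ring

lemma exp_decay {B : ℝ} (hB : 0 < B) :
    Tendsto (fun t : ℝ => Real.exp (-B * t)) atTop (𝓝 0) := by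
  rw [Real.tendsto_exp_comp_nhds_zero]
  exact tendsto_id.const_mul_atTop_of_neg (neg_neg_of_pos hB)

/-- Tightness of the constant `2` for the classical two-state Davies evolution
`p(t) = q + (p(0) − q)e^{−At}`: with `x = e^{−At}` and
`g(t,k) = d(p(0)‖q) − d(p(t)‖q) − d(p(0)‖p(kt))`, one has
`g = (p(0)−q)²/(q(1−q)) · (x^k − x²/2) + O(x³)` as `t → ∞`; hence for every `k > 2`
eventually `g(t,k) < 0`, while `g(t,2) > 0` for all sufficiently large `t`. -/
theorem two_state_davies_tightness
    (A q p0 : ℝ) (hA : 0 < A) (hq0 : 0 < q) (hq1 : q < 1)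
    (hp0 : 0 < p0) (hp1 : p0 < 1) (hpq : p0 ≠ q)
    (pt : ℝ → ℝ) (hpt : ∀ t, pt t = q + (p0 - q) * Real.exp (-A * t))
    (g : ℝ → ℝ → ℝ)
    (hg : ∀ t k, g t k = dKL p0 q - dKL (pt t) q - dKL p0 (pt (k * t))) :
    (∀ k : ℝ, 2 < k →
      (fun t => g t k - (p0 - q) ^ 2 / (q * (1 - q))
          * (Real.exp (-A * t) ^ k - Real.exp (-A * t) ^ (2 : ℕ) / 2))
        =O[atTop] fun t => Real.exp (-A * t) ^ (3 : ℕ))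
    ∧ (∀ k : ℝ, 2 < k → ∃ t₀ : ℝ, ∀ t > t₀, g t k < 0)
    ∧ (∃ t₀ : ℝ, ∀ t > t₀, g t 2 > 0) := by
  have hc : p0 - q ≠ 0 := sub_ne_zero.mpr hpq
  have hq1' : 0 < 1 - q := by linarith
  have hp1' : 0 < 1 - p0 := by linarith
  have hc2 : 0 < (p0 - q)^2 := lt_of_le_of_ne (sq_nonneg _) (Ne.symm (pow_ne_zero 2 hc))
  have habs : 0 < |p0 - q| := abs_pos.mpr hc
  have hM : 0 < (p0 - q) ^ 2 / (q * (1 - q)) := div_pos hc2 (mul_pos hq0 hq1')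
  set M : ℝ := (p0 - q) ^ 2 / (q * (1 - q)) with hMdef
  have hCψ : 0 < 2*p0/q^2 + 2*(1-p0)/(1-q)^2 := by
    have := pow_pos hq0 2
    have := pow_pos hq1' 2
    positivity
  have hCφ : 0 < 4/q^2 + 4/(1-q)^2 := by
    have := pow_pos hq0 2
    have := pow_pos hq1' 2
    positivity
  have hC : 0 < (2*p0/q^2 + 2*(1-p0)/(1-q)^2)*(p0-q)^2
      + (4/q^2 + 4/(1-q)^2)*|p0-q|^3 :=
    add_pos (mul_pos hCψ hc2) (mul_pos hCφ (pow_pos habs 3))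
  set C : ℝ := (2*p0/q^2 + 2*(1-p0)/(1-q)^2)*(p0-q)^2
      + (4/q^2 + 4/(1-q)^2)*|p0-q|^3 with hCdef
  -- the master estimate
  have master : ∀ k : ℝ, 2 ≤ k → ∀ᶠ t in atTop,
      |g t k - M * (Real.exp (-A*t) ^ k - Real.exp (-A*t) ^ (2:ℕ)/2)|
        ≤ C * Real.exp (-A*t) ^ (3:ℕ) := by
    intro k hk
    have hk0 : 0 < A * k := by positivity
    have hxk : ∀ t : ℝ, Real.exp (-A*t) ^ k = Real.exp (-(A*k) * t) := by
      intro t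
      rw [Real.rpow_def_of_pos (Real.exp_pos _), Real.log_exp]
      congr 1; ring
    have δpos : 0 < min (q/2) ((1-q)/2) := lt_min (by linarith) (by linarith)
    have t1 : Tendsto (fun t : ℝ => |p0-q| * Real.exp (-A*t)) atTop (𝓝 0) := by
      simpa using (exp_decay hA).const_mul |p0-q|
    have t2 : Tendsto (fun t : ℝ => |p0-q| * Real.exp (-(A*k)*t)) atTop (𝓝 0) := by
      simpa using (exp_decay hk0).const_mul |p0-q|
    have ev1 := t1.eventually (gt_mem_nhds δpos)
    have ev2 := t2.eventually (gt_mem_nhds δpos)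
    filter_upwards [ev1, ev2, eventually_ge_atTop (0:ℝ)] with t h1 h2 h3
    set X : ℝ := Real.exp (-A*t) with hXdef
    have hX0 : 0 < X := Real.exp_pos _
    have hX1 : X ≤ 1 := Real.exp_le_one_iff.mpr (by nlinarith [mul_nonneg hA.le h3])
    set Y : ℝ := X ^ k with hYdef
    have hYe : Y = Real.exp (-(A*k)*t) := hxk t
    have hY0 : 0 < Y := by rw [hYe]; exact Real.exp_pos _
    -- smallness of u1 = (p0-q)*X and u2 = (p0-q)*Y
    have hu1 : |(p0-q)*X| < min (q/2) ((1-q)/2) := by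
      rw [abs_mul, abs_of_pos hX0]; exact h1
    have hu2 : |(p0-q)*Y| < min (q/2) ((1-q)/2) := by
      rw [abs_mul, abs_of_pos hY0, hYe]; exact h2
    have hu1a : |(p0-q)*X| ≤ q/2 := (hu1.trans_le (min_le_left _ _)).le
    have hu1b : |(p0-q)*X| ≤ (1-q)/2 := (hu1.trans_le (min_le_right _ _)).le
    have hu2a : |(p0-q)*Y| ≤ q/2 := (hu2.trans_le (min_le_left _ _)).le
    have hu2b : |(p0-q)*Y| ≤ (1-q)/2 := (hu2.trans_le (min_le_right _ _)).le
    have hr0 : 0 < q + (p0-q)*Y := by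
      have := (abs_le.mp hu2a).1; linarith
    have hr1 : q + (p0-q)*Y < 1 := by
      have := (abs_le.mp hu2b).2; linarith
    -- identity for g
    have hptt : pt t = q + (p0-q)*X := hpt t
    have hptk : pt (k*t) = q + (p0-q)*Y := by
      rw [hpt (k*t), hYe]
      congr 2
      ring
    have hd := dKL_diff hp0 hp1 hq0 hq1 hr0 hr1
    have gid : g t k
        = (p0 * Real.log ((q+(p0-q)*Y)/q)
            + (1-p0) * Real.log ((1-(q+(p0-q)*Y))/(1-q)))
          - dKL (q+(p0-q)*X) q := by
      rw [hg t k, hptt, hptk]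
      linear_combination hd
    have PB := psi_bound (u := (p0-q)*Y) hq0 hq1 hp0 hp1 hu2a hu2b
    have FB := phi_bound (u := (p0-q)*X) hq0 hq1 hu1a hu1b
    have key : g t k - M * (Y - X ^ (2:ℕ)/2)
        = ((p0 * Real.log ((q+(p0-q)*Y)/q)
            + (1-p0) * Real.log ((1-(q+(p0-q)*Y))/(1-q)))
              - ((p0-q)*Y)*(p0-q)/(q*(1-q)))
          - (dKL (q+(p0-q)*X) q - ((p0-q)*X)^2/(2*(q*(1-q)))) := by
      have hqne : q ≠ 0 := ne_of_gt hq0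
      have hq1ne : (1:ℝ) - q ≠ 0 := ne_of_gt hq1'
      have e6 : M * (Y - X ^ (2:ℕ)/2)
          = ((p0-q)*Y)*(p0-q)/(q*(1-q)) - ((p0-q)*X)^2/(2*(q*(1-q))) := by
        rw [hMdef]
        field_simp
      rw [gid]
      linear_combination -e6
    -- bound (X^k)^2 = Y^2 ≤ X^3
    have hY2 : Y^(2:ℕ) ≤ X^(3:ℕ) := by
      have e1 : Y^(2:ℕ) = X ^ (k*2) := by
        rw [hYdef, Real.rpow_mul hX0.le k 2]
        norm_num
      have e2 : X ^ ((3:ℕ):ℝ) = X^(3:ℕ) := Real.rpow_natCast X 3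
      rw [e1, ← e2]
      exact Real.rpow_le_rpow_of_exponent_ge hX0 hX1 (by push_cast; linarith)
    rw [key]
    have habs1 : |(p0-q)*X|^3 = |p0-q|^3 * X^3 := by
      rw [abs_mul, abs_of_pos hX0, mul_pow]
    have hu2sq : ((p0-q)*Y)^2 = (p0-q)^2 * Y^2 := by ring
    calc |((p0 * Real.log ((q+(p0-q)*Y)/q)
            + (1-p0) * Real.log ((1-(q+(p0-q)*Y))/(1-q)))
              - ((p0-q)*Y)*(p0-q)/(q*(1-q)))
          - (dKL (q+(p0-q)*X) q - ((p0-q)*X)^2/(2*(q*(1-q))))|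
        ≤ |(p0 * Real.log ((q+(p0-q)*Y)/q)
            + (1-p0) * Real.log ((1-(q+(p0-q)*Y))/(1-q)))
              - ((p0-q)*Y)*(p0-q)/(q*(1-q))|
          + |dKL (q+(p0-q)*X) q - ((p0-q)*X)^2/(2*(q*(1-q)))| := abs_sub _ _
      _ ≤ (2*p0/q^2 + 2*(1-p0)/(1-q)^2) * ((p0-q)*Y)^2
          + (4/q^2 + 4/(1-q)^2) * |(p0-q)*X|^3 := add_le_add PB FB
      _ ≤ C * X^(3:ℕ) := by
          rw [hu2sq, habs1, hCdef]
          have h5 : (2*p0/q^2 + 2*(1-p0)/(1-q)^2) * ((p0-q)^2 * Y^2)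
              ≤ (2*p0/q^2 + 2*(1-p0)/(1-q)^2) * ((p0-q)^2 * X^3) :=
            mul_le_mul_of_nonneg_left (mul_le_mul_of_nonneg_left hY2 hc2.le) hCψ.le
          have e5 : (2*p0/q^2 + 2*(1-p0)/(1-q)^2) * ((p0-q)^2 * X^3)
              + (4/q^2 + 4/(1-q)^2) * (|p0-q|^3 * X^3)
              = ((2*p0/q^2 + 2*(1-p0)/(1-q)^2)*(p0-q)^2
                  + (4/q^2 + 4/(1-q)^2)*|p0-q|^3) * X^3 := by
            ring
          linarith [h5]
  refine ⟨?_, ?_, ?_⟩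
  · -- big-O
    intro k hk
    refine Asymptotics.IsBigO.of_bound C ?_
    filter_upwards [master k hk.le] with t ht
    rw [Real.norm_eq_abs, Real.norm_eq_abs, abs_of_pos (pow_pos (Real.exp_pos _) 3)]
    exact ht
  · -- negativity for k > 2
    intro k hk
    have hk2 : 0 < A * (k - 2) := by nlinarith
    have evB := (exp_decay hk2).eventually (gt_mem_nhds (by norm_num : (0:ℝ) < 1/4))
    have tC : Tendsto (fun t : ℝ => C * Real.exp (-A*t)) atTop (𝓝 0) := by
      simpa using (exp_decay hA).const_mul C
    have evC := tC.eventually (gt_mem_nhds (by positivity : (0:ℝ) < M/4))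
    have hall := (master k hk.le).and (evB.and evC)
    obtain ⟨t₀, ht₀⟩ := eventually_atTop.mp hall
    refine ⟨t₀, fun t ht => ?_⟩
    obtain ⟨hbd, hB, hCx⟩ := ht₀ t ht.le
    set X : ℝ := Real.exp (-A*t) with hXdef
    have hX0 : 0 < X := Real.exp_pos _
    have hXk2 : X ^ (k-2) = Real.exp (-(A*(k-2))*t) := by
      rw [Real.rpow_def_of_pos hX0, Real.log_exp]; congr 1; ring
    have hsplit : X ^ k = X^(2:ℕ) * X ^ (k-2) := by
      have : X ^ k = X ^ ((2:ℝ) + (k-2)) := by norm_num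
      rw [this, Real.rpow_add hX0]
      congr 1
      rw [show ((2:ℝ)) = ((2:ℕ):ℝ) by norm_num, Real.rpow_natCast]
    have h1 : g t k ≤ M * (X ^ k - X^(2:ℕ)/2) + C * X^(3:ℕ) := by
      have := (abs_le.mp hbd).2; linarith
    have hB' : M * X ^ (k-2) < M/4 := by
      rw [hXk2]
      calc M * Real.exp (-(A*(k-2))*t) < M * (1/4) :=
            mul_lt_mul_of_pos_left hB hM
        _ = M/4 := by ring
    have hCx' : C * X < M/4 := hCx
    have hbr : M * X ^ (k-2) + C * X - M/2 < 0 := by linarith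
    have e3 : M * (X^(2:ℕ) * X ^ (k-2) - X^(2:ℕ)/2) + C * (X^(2:ℕ) * X)
        = X^(2:ℕ) * (M * X ^ (k-2) + C * X - M/2) := by ring
    have hX2 : 0 < X^(2:ℕ) := pow_pos hX0 2
    have hfin : X^(2:ℕ) * (M * X ^ (k-2) + C * X - M/2) < 0 :=
      mul_neg_of_pos_of_neg hX2 hbr
    have e4 : X^(3:ℕ) = X^(2:ℕ) * X := by ring
    calc g t k ≤ M * (X ^ k - X^(2:ℕ)/2) + C * X^(3:ℕ) := h1
      _ = X^(2:ℕ) * (M * X ^ (k-2) + C * X - M/2) := by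
          rw [hsplit, e4, ← e3]
      _ < 0 := hfin
  · -- positivity for k = 2
    have tC : Tendsto (fun t : ℝ => C * Real.exp (-A*t)) atTop (𝓝 0) := by
      simpa using (exp_decay hA).const_mul C
    have evC := tC.eventually (gt_mem_nhds (by positivity : (0:ℝ) < M/4))
    have hall := (master 2 le_rfl).and evC
    obtain ⟨t₀, ht₀⟩ := eventually_atTop.mp hall
    refine ⟨t₀, fun t ht => ?_⟩
    obtain ⟨hbd, hCx⟩ := ht₀ t ht.le
    set X : ℝ := Real.exp (-A*t) with hXdef
    have hX0 : 0 < X := Real.exp_pos _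
    have hX2e : X ^ (2:ℝ) = X^(2:ℕ) := by
      rw [show ((2:ℝ)) = ((2:ℕ):ℝ) by norm_num, Real.rpow_natCast]
    have h1 : M * (X ^ (2:ℝ) - X^(2:ℕ)/2) - C * X^(3:ℕ) ≤ g t 2 := by
      have := (abs_le.mp hbd).1; linarith
    rw [hX2e] at h1
    have hX2 : 0 < X^(2:ℕ) := pow_pos hX0 2
    have e3 : M * (X^(2:ℕ) - X^(2:ℕ)/2) - C * (X^(2:ℕ) * X)
        = X^(2:ℕ) * (M/2 - C * X) := by ring
    have hfin : 0 < X^(2:ℕ) * (M/2 - C * X) :=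
      mul_pos hX2 (by linarith)
    have e4 : X^(3:ℕ) = X^(2:ℕ) * X := by ring
    calc (0:ℝ) < X^(2:ℕ) * (M/2 - C * X) := hfin
      _ = M * (X^(2:ℕ) - X^(2:ℕ)/2) - C * X^(3:ℕ) := by rw [e4, e3]
      _ ≤ g t 2 := h1
end

section
/- For the two-state Davies evolution p(t) = q + (p(0)−q)e^{−At} with A > 0, 0 < q < 1, 0 < p(0) < 1, the entropy production bound with constant k = 2 holds: d(p(0)‖q) − d(p(t)‖q) ≥ d(p(0)‖p(2t)) for all t ≥ 0, where d is the binary relative entropy. -/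
set_option maxHeartbeats 1000000


/-- Two-point Jensen inequality for the logarithm. -/
lemma log_combo {x y a b : ℝ} (hx : 0 < x) (hy : 0 < y) (ha : 0 ≤ a) (hb : 0 ≤ b)
    (hab : a + b = 1) :
    a * Real.log x + b * Real.log y ≤ Real.log (a * x + b * y) := by
  have h := strictConcaveOn_log_Ioi.concaveOn.2 (Set.mem_Ioi.2 hx) (Set.mem_Ioi.2 hy)
    ha hb hab
  simpa [smul_eq_mul] using h

/-- Entropy-production bound with constant `k = 2` for the classical two-state Davies
evolution `p(t) = q + (p(0)−q)e^{−At}`: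
`d(p(0)‖q) − d(p(t)‖q) ≥ d(p(0)‖p(2t))` for all `t ≥ 0`. -/
theorem two_state_davies_entropy_production_bound
    (A q p0 : ℝ) (hA : 0 < A) (hq0 : 0 < q) (hq1 : q < 1)
    (hp0 : 0 < p0) (hp1 : p0 < 1)
    (pt : ℝ → ℝ) (hpt : ∀ t, pt t = q + (p0 - q) * Real.exp (-A * t)) :
    ∀ t : ℝ, 0 ≤ t →
      dKL p0 q - dKL (pt t) q ≥ dKL p0 (pt (2 * t)) := by
  intro t ht
  set s : ℝ := Real.exp (-A * t) with hsdef
  have hs0 : 0 < s := Real.exp_pos _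
  have hs1 : s ≤ 1 := by
    rw [hsdef]
    have : -A * t ≤ 0 := by nlinarith
    calc Real.exp (-A * t) ≤ Real.exp 0 := Real.exp_le_exp.2 this
      _ = 1 := Real.exp_zero
  have h2t : Real.exp (-A * (2 * t)) = s * s := by
    rw [hsdef, ← Real.exp_add]; congr 1; ring
  have hat : pt t = q + (p0 - q) * s := by rw [hpt]
  have hrt : pt (2 * t) = q + (p0 - q) * (s * s) := by rw [hpt, h2t]
  set a : ℝ := q + (p0 - q) * s with hadef
  set r : ℝ := q + (p0 - q) * (s * s) with hrdef
  rw [hat, hrt]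
  -- positivity facts
  have hq1' : 0 < 1 - q := by linarith
  have hp1' : 0 < 1 - p0 := by linarith
  have ha0 : 0 < a := by
    have h1 : 0 < s * p0 := mul_pos hs0 hp0
    have h2 : 0 ≤ (1 - s) * q := mul_nonneg (by linarith) hq0.le
    nlinarith
  have ha1 : a < 1 := by
    have h1 : 0 < s * (1 - p0) := mul_pos hs0 hp1'
    have h2 : 0 ≤ (1 - s) * (1 - q) := mul_nonneg (by linarith) hq1'.le
    nlinarith
  have ha1' : 0 < 1 - a := by linarith
  have hs20 : 0 < s * s := mul_pos hs0 hs0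
  have hs21 : s * s ≤ 1 := by nlinarith
  have hr0 : 0 < r := by
    have h1 : 0 < (s * s) * p0 := mul_pos hs20 hp0
    have h2 : 0 ≤ (1 - s * s) * q := mul_nonneg (by linarith) hq0.le
    nlinarith
  have hr1 : r < 1 := by
    have h1 : 0 < (s * s) * (1 - p0) := mul_pos hs20 hp1'
    have h2 : 0 ≤ (1 - s * s) * (1 - q) := mul_nonneg (by linarith) hq1'.le
    nlinarith
  have hr1' : 0 < 1 - r := by linarith
  -- Jensen step (i)
  set L1 : ℝ := Real.log (a / q) with hL1
  set L2 : ℝ := Real.log ((1 - a) / (1 - q)) with hL2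
  have hx : 0 < a / q := div_pos ha0 hq0
  have hy : 0 < (1 - a) / (1 - q) := div_pos ha1' hq1'
  have hc1 : (0:ℝ) ≤ s + (1 - s) * q := by nlinarith
  have hc2 : (0:ℝ) ≤ (1 - s) * (1 - q) := mul_nonneg (by linarith) hq1'.le
  have hc12 : (s + (1 - s) * q) + (1 - s) * (1 - q) = 1 := by ring
  have hi : (s + (1 - s) * q) * L1 + ((1 - s) * (1 - q)) * L2 ≤ Real.log (r / q) := by
    have h := log_combo hx hy hc1 hc2 hc12
    have heq : (s + (1 - s) * q) * (a / q) + ((1 - s) * (1 - q)) * ((1 - a) / (1 - q))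
        = r / q := by
      rw [hadef, hrdef]; field_simp; ring
    rw [heq] at h
    exact h
  -- Jensen step (ii)
  have hd1 : (0:ℝ) ≤ (1 - s) * q := mul_nonneg (by linarith) hq0.le
  have hd2 : (0:ℝ) ≤ s + (1 - s) * (1 - q) := by nlinarith
  have hd12 : ((1 - s) * q) + (s + (1 - s) * (1 - q)) = 1 := by ring
  have hii : ((1 - s) * q) * L1 + (s + (1 - s) * (1 - q)) * L2
      ≤ Real.log ((1 - r) / (1 - q)) := by
    have h := log_combo hx hy hd1 hd2 hd12
    have heq : ((1 - s) * q) * (a / q) + (s + (1 - s) * (1 - q)) * ((1 - a) / (1 - q))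
        = (1 - r) / (1 - q) := by
      rw [hadef, hrdef]; field_simp; ring
    rw [heq] at h
    exact h
  -- combine with weights p0, 1 - p0
  have hkey : a * L1 + (1 - a) * L2
      ≤ p0 * Real.log (r / q) + (1 - p0) * Real.log ((1 - r) / (1 - q)) := by
    have h1 := mul_le_mul_of_nonneg_left hi hp0.le
    have h2 := mul_le_mul_of_nonneg_left hii hp1'.le
    have hcomb : p0 * ((s + (1 - s) * q) * L1 + ((1 - s) * (1 - q)) * L2)
        + (1 - p0) * (((1 - s) * q) * L1 + (s + (1 - s) * (1 - q)) * L2)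
        = a * L1 + (1 - a) * L2 := by
      rw [hadef]; ring
    linarith
  -- rewrite the difference of divergences
  have hident : dKL p0 q - dKL p0 r
      = p0 * Real.log (r / q) + (1 - p0) * Real.log ((1 - r) / (1 - q)) := by
    unfold dKL
    rw [Real.log_div hp0.ne' hq0.ne', Real.log_div hp0.ne' hr0.ne',
      Real.log_div hp1'.ne' hq1'.ne', Real.log_div hp1'.ne' hr1'.ne',
      Real.log_div hr0.ne' hq0.ne', Real.log_div hr1'.ne' hq1'.ne']
    ring
  have hdka : dKL a q = a * L1 + (1 - a) * L2 := by
    unfold dKL; rw [hL1, hL2]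
  clear_value s a r L1 L2
  linarith
end

section
/- Let Ω be a positive definite density matrix with spectral decomposition Ω = Σᵢ pᵢ|i⟩⟨i|, and let L be a superoperator that is time-translation symmetric with respect to Ω, i.e. L(Ω^{it} X Ω^{−it}) = Ω^{it} L(X) Ω^{−it} for all real t and all X. Then L preserves modes of coherence: for basis matrix units |n⟩⟨m|, the matrix element ⟨i|L(|n⟩⟨m|)|j⟩ vanishes unless pᵢ/pⱼ = pₙ/pₘ. -/
open Matrix

lemma cpow_I_mul_eq_exp (x : ℝ) (hx : 0 < x) (z : ℂ) :
    (x : ℂ) ^ (Complex.I * z) = Complex.exp (Complex.I * z * (Real.log x : ℂ)) := by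
  rw [Complex.cpow_def_of_ne_zero (by exact_mod_cast hx.ne'),
    ← Complex.ofReal_log hx.le, mul_comm]

/-- A time-translation symmetric superoperator preserves modes of coherence: if
`Ω = diag(p)` is positive definite and `L(Ω^{it} X Ω^{−it}) = Ω^{it} L(X) Ω^{−it}` for all
real `t`, then the matrix element `⟨i|L(|n⟩⟨m|)|j⟩` vanishes unless `pᵢ/pⱼ = pₙ/pₘ`. -/
theorem tts_preserves_modes_of_coherence {d : ℕ}
    (p : Fin d → ℝ) (hp : ∀ i, 0 < p i) (hptr : ∑ i, p i = 1)
    (L : Module.End ℂ (Matrix (Fin d) (Fin d) ℂ))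
    (Om : ℝ → Matrix (Fin d) (Fin d) ℂ)
    (hOm : ∀ t : ℝ, Om t = Matrix.diagonal fun i => ((p i : ℂ) ^ (Complex.I * (t : ℂ))))
    (hTTS : ∀ (t : ℝ) (X : Matrix (Fin d) (Fin d) ℂ),
      L (Om t * X * Om (-t)) = Om t * L X * Om (-t)) :
    ∀ i j n m : Fin d, p i / p j ≠ p n / p m →
      L (Matrix.single n m (1 : ℂ)) i j = 0 := by
  intro i j n m hne
  set E := Matrix.single n m (1 : ℂ) with hE
  set c := L E i j with hc
  -- key entrywise identity for all t
  have key : ∀ t : ℝ,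
      ((p n : ℂ) ^ (Complex.I * (t : ℂ)) * (p m : ℂ) ^ (Complex.I * ((-t : ℝ) : ℂ))) * c
      = ((p i : ℂ) ^ (Complex.I * (t : ℂ)) * (p j : ℂ) ^ (Complex.I * ((-t : ℝ) : ℂ))) * c := by
    intro t
    have h1 : Om t * E * Om (-t)
        = ((p n : ℂ) ^ (Complex.I * (t : ℂ)) * (p m : ℂ) ^ (Complex.I * ((-t : ℝ) : ℂ))) • E := by
      ext a b
      rw [hOm t, hOm (-t)]
      simp only [Matrix.mul_diagonal, Matrix.diagonal_mul, Matrix.smul_apply, hE,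
        Matrix.single, Matrix.of_apply, smul_eq_mul]
      by_cases h1 : n = a <;> by_cases h2 : m = b <;> simp [h1, h2] <;> ring
    have h2 := hTTS t E
    rw [h1, _root_.map_smul] at h2
    have h3 := congrFun (congrFun h2 i) j
    simp only [Matrix.smul_apply, smul_eq_mul, ← hc] at h3
    rw [h3, hOm t, hOm (-t)]
    simp only [Matrix.mul_diagonal, Matrix.diagonal_mul]
    ring
  -- convert to exponentials
  set α : ℝ := Real.log (p n / p m) with hα
  set β : ℝ := Real.log (p i / p j) with hβ
  have hαn : α = Real.log (p n) - Real.log (p m) := Real.log_div (hp n).ne' (hp m).ne'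
  have hβn : β = Real.log (p i) - Real.log (p j) := Real.log_div (hp i).ne' (hp j).ne'
  have hαβ : β ≠ α := by
    intro h
    apply hne
    have := congrArg Real.exp h
    rwa [hβ, hα, Real.exp_log (div_pos (hp i) (hp j)),
      Real.exp_log (div_pos (hp n) (hp m))] at this
  have key2 : ∀ t : ℝ, Complex.exp (Complex.I * t * α) * c
      = Complex.exp (Complex.I * t * β) * c := by
    intro t
    have := key t
    rw [cpow_I_mul_eq_exp _ (hp n), cpow_I_mul_eq_exp _ (hp m),
      cpow_I_mul_eq_exp _ (hp i), cpow_I_mul_eq_exp _ (hp j),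
      ← Complex.exp_add, ← Complex.exp_add] at this
    rw [show (Complex.I * t * α : ℂ)
        = Complex.I * t * (Real.log (p n) : ℂ) + Complex.I * ((-t : ℝ) : ℂ) * (Real.log (p m) : ℂ) by
        push_cast [hαn]; ring,
      show (Complex.I * t * β : ℂ)
        = Complex.I * t * (Real.log (p i) : ℂ) + Complex.I * ((-t : ℝ) : ℂ) * (Real.log (p j) : ℂ) by
        push_cast [hβn]; ring]
    exact this
  -- choose t = π / (α - β)
  have hsub : α - β ≠ 0 := sub_ne_zero.mpr (Ne.symm hαβ)
  set t : ℝ := Real.pi / (α - β) with ht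
  have htαβ : (t : ℝ) * (α - β) = Real.pi := div_mul_cancel₀ _ hsub
  have h := key2 t
  have hsplit : (Complex.I * t * α : ℂ) = Complex.I * t * β + Real.pi * Complex.I := by
    have h0 : ((t * (α - β) : ℝ) : ℂ) = (Real.pi : ℂ) := by exact_mod_cast congrArg Complex.ofReal htαβ
    push_cast at h0 ⊢
    linear_combination Complex.I * h0
  rw [hsplit, Complex.exp_add, Complex.exp_pi_mul_I] at h
  -- h : exp(Itβ) * (-1) * c = exp(Itβ) * c
  have hexp : Complex.exp (Complex.I * t * β) ≠ 0 := Complex.exp_ne_zero _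
  have : Complex.exp (Complex.I * t * β) * (2 * c) = 0 := by linear_combination -h
  rcases mul_eq_zero.mp this with h' | h'
  · exact absurd h' hexp
  · have : (2 : ℂ) ≠ 0 := by norm_num
    exact (mul_eq_zero.mp h').resolve_left this
end

section
/- Let Ω be a positive definite density matrix with eigenvalues pᵢ and eigenbasis |i⟩, and let L be a time-translation symmetric superoperator with respect to Ω (L(Ω^{it}XΩ^{−it}) = Ω^{it}L(X)Ω^{−it} for all t ∈ R). Then the two quantum detailed balance conditions L(X) = Ω L†(Ω^{−1} X) (GNS/Kossakowski form) and L(X) = Ω^{1/2} L†(Ω^{−1/2} X Ω^{−1/2}) Ω^{1/2} (KMS form) are equivalent. -/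
open Matrix

private lemma qdb_sin_trick {c : ℝ}
    (h : ∀ t : ℝ, Complex.exp ((c * t : ℝ) * Complex.I) = 1) : c = 0 := by
  by_contra hc
  have h1 := h (Real.pi / (2 * c))
  have h2 : c * (Real.pi / (2 * c)) = Real.pi / 2 := by field_simp
  have h3 := congrArg Complex.im h1
  rw [Complex.exp_ofReal_mul_I_im, h2] at h3
  simp [Real.sin_pi_div_two] at h3

private lemma qdb_cpow_pos_eq {a : ℝ} (ha : 0 < a) (z : ℂ) :
    ((a : ℝ) : ℂ) ^ z = Complex.exp ((Real.log a : ℂ) * z) := by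
  rw [Complex.cpow_def_of_ne_zero (by exact_mod_cast ha.ne'), Complex.ofReal_log ha.le]

private lemma qdb_diag_sbm_diag {d : ℕ} (v w : Fin d → ℂ) (n m : Fin d) :
    Matrix.diagonal v * Matrix.single n m (1:ℂ) * Matrix.diagonal w
      = (v n * w m) • Matrix.single n m (1:ℂ) := by
  ext i j
  simp only [Matrix.diagonal_mul, Matrix.mul_diagonal, Matrix.smul_apply, Matrix.single,
    Matrix.of_apply, smul_eq_mul]
  by_cases hi : n = i <;> by_cases hj : m = j <;> simp [hi, hj]

private lemma qdb_diag_sbm {d : ℕ} (v : Fin d → ℂ) (n m : Fin d) :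
    Matrix.diagonal v * Matrix.single n m (1:ℂ)
      = v n • Matrix.single n m (1:ℂ) := by
  ext i j
  simp only [Matrix.diagonal_mul, Matrix.smul_apply, Matrix.single, Matrix.of_apply,
    smul_eq_mul]
  by_cases hi : n = i <;> by_cases hj : m = j <;> simp [hi, hj]

private lemma qdb_ext_of_basis {d : ℕ} (f g : Module.End ℂ (Matrix (Fin d) (Fin d) ℂ))
    (h : ∀ n m, f (Matrix.single n m 1) = g (Matrix.single n m 1)) :
    ∀ X, f X = g X := by
  intro X
  have hX := Matrix.matrix_eq_sum_single X
  have hsm : ∀ (i j : Fin d) (c : ℂ),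
      Matrix.single i j c = c • Matrix.single i j (1:ℂ) := by
    intro i j c; rw [Matrix.smul_single, smul_eq_mul, mul_one]
  conv_lhs => rw [hX]
  conv_rhs => rw [hX]
  simp only [map_sum]
  refine Finset.sum_congr rfl fun i _ => Finset.sum_congr rfl fun j _ => ?_
  rw [hsm, _root_.map_smul, _root_.map_smul, h]

private lemma qdb_tts_support {d : ℕ} (p : Fin d → ℝ) (hp : ∀ i, 0 < p i)
    (L : Module.End ℂ (Matrix (Fin d) (Fin d) ℂ))
    (Om : ℝ → Matrix (Fin d) (Fin d) ℂ)
    (hOm : ∀ t : ℝ, Om t = Matrix.diagonal fun i => ((p i : ℂ) ^ (Complex.I * (t : ℂ))))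
    (hTTS : ∀ (t : ℝ) (X : Matrix (Fin d) (Fin d) ℂ),
      L (Om t * X * Om (-t)) = Om t * L X * Om (-t))
    (n m i j : Fin d) (hne : L (Matrix.single n m (1:ℂ)) i j ≠ 0) :
    p i * p m = p j * p n := by
  set E := Matrix.single n m (1:ℂ) with hE
  have key : ∀ t : ℝ,
      ((p n : ℂ) ^ (Complex.I * (t:ℂ)) * (p m : ℂ) ^ (Complex.I * ((-t:ℝ):ℂ))) * (L E i j)
        = (p i : ℂ) ^ (Complex.I * (t:ℂ)) * (L E i j) * (p j : ℂ) ^ (Complex.I * ((-t:ℝ):ℂ)) := by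
    intro t
    have h := hTTS t E
    rw [hOm t, hOm (-t), qdb_diag_sbm_diag, _root_.map_smul] at h
    have h3 := congrArg (fun M : Matrix (Fin d) (Fin d) ℂ => M i j) h
    simpa [Matrix.diagonal_mul, Matrix.mul_diagonal, smul_eq_mul] using h3
  have hc : (Real.log (p n) - Real.log (p m) - Real.log (p i) + Real.log (p j)) = 0 := by
    apply qdb_sin_trick
    intro t
    have k := key t
    rw [qdb_cpow_pos_eq (hp n), qdb_cpow_pos_eq (hp m), qdb_cpow_pos_eq (hp i),
      qdb_cpow_pos_eq (hp j)] at k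
    set a := L E i j
    have k' : (Complex.exp ((Real.log (p n):ℂ) * (Complex.I * (t:ℂ))) *
        Complex.exp ((Real.log (p m):ℂ) * (Complex.I * ((-t:ℝ):ℂ)))) * a
        = (Complex.exp ((Real.log (p i):ℂ) * (Complex.I * (t:ℂ))) *
        Complex.exp ((Real.log (p j):ℂ) * (Complex.I * ((-t:ℝ):ℂ)))) * a := by
      linear_combination k
    have k2 := mul_right_cancel₀ hne k'
    rw [← Complex.exp_add, ← Complex.exp_add] at k2
    have k3 : Complex.exp (((Real.log (p n):ℂ) * (Complex.I * (t:ℂ)) +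
        (Real.log (p m):ℂ) * (Complex.I * ((-t:ℝ):ℂ))) -
        ((Real.log (p i):ℂ) * (Complex.I * (t:ℂ)) +
        (Real.log (p j):ℂ) * (Complex.I * ((-t:ℝ):ℂ)))) = 1 := by
      rw [Complex.exp_sub, k2, div_self (Complex.exp_ne_zero _)]
    convert k3 using 2
    push_cast
    ring
  have hlog : Real.log (p i * p m) = Real.log (p j * p n) := by
    rw [Real.log_mul (hp i).ne' (hp m).ne', Real.log_mul (hp j).ne' (hp n).ne']
    linarith
  exact Real.log_injOn_pos (Set.mem_Ioi.mpr (mul_pos (hp i) (hp m)))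
    (Set.mem_Ioi.mpr (mul_pos (hp j) (hp n))) hlog

private lemma qdb_sqrt_scalar {a b c e : ℝ} (ha : 0 < a) (hb : 0 < b) (hc : 0 < c) (he : 0 < e)
    (h : a * e = b * c) :
    Real.sqrt a * Real.sqrt b * c = Real.sqrt c * Real.sqrt e * a := by
  have h1 : Real.sqrt b * Real.sqrt c = Real.sqrt e * Real.sqrt a := by
    rw [← Real.sqrt_mul hb.le, ← Real.sqrt_mul he.le]
    have hbc : b * c = e * a := by linarith [h, mul_comm a e]
    rw [hbc]
  have hsc := Real.mul_self_sqrt hc.le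
  have hsa := Real.mul_self_sqrt ha.le
  linear_combination (Real.sqrt a * Real.sqrt c) * h1 - (Real.sqrt a * Real.sqrt b) * hsc +
    (Real.sqrt c * Real.sqrt e) * hsa

/-- For a superoperator `L` which is time-translation symmetric with respect to a positive
definite density matrix `Ω = diag(p)`, the GNS/Kossakowski detailed balance condition
`L(X) = Ω L†(Ω⁻¹ X)` and the KMS detailed balance condition
`L(X) = Ω^{1/2} L†(Ω^{−1/2} X Ω^{−1/2}) Ω^{1/2}` are equivalent. -/
theorem qdb_gns_iff_kms_of_tts {d : ℕ}
    (p : Fin d → ℝ) (hp : ∀ i, 0 < p i) (hptr : ∑ i, p i = 1)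
    (Ω : Matrix (Fin d) (Fin d) ℂ)
    (hΩ : Ω = Matrix.diagonal fun i => ((p i : ℝ) : ℂ))
    (L Ldag : Module.End ℂ (Matrix (Fin d) (Fin d) ℂ))
    (hadj : ∀ A B, (Aᴴ * L B).trace = ((Ldag A)ᴴ * B).trace)
    (Om : ℝ → Matrix (Fin d) (Fin d) ℂ)
    (hOm : ∀ t : ℝ, Om t = Matrix.diagonal fun i => ((p i : ℂ) ^ (Complex.I * (t : ℂ))))
    (hTTS : ∀ (t : ℝ) (X : Matrix (Fin d) (Fin d) ℂ),
      L (Om t * X * Om (-t)) = Om t * L X * Om (-t)) :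
    (∀ X, L X = Ω * Ldag (Ω⁻¹ * X))
      ↔ (∀ X, L X = (Matrix.diagonal fun i => ((Real.sqrt (p i) : ℝ) : ℂ))
          * Ldag ((Matrix.diagonal fun i => (((Real.sqrt (p i))⁻¹ : ℝ) : ℂ)) * X
              * (Matrix.diagonal fun i => (((Real.sqrt (p i))⁻¹ : ℝ) : ℂ)))
          * (Matrix.diagonal fun i => ((Real.sqrt (p i) : ℝ) : ℂ))) := by
  subst hΩ
  have hqne : ∀ i, ((p i : ℝ) : ℂ) ≠ 0 := fun i => by exact_mod_cast (hp i).ne'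
  have hspos : ∀ i, 0 < Real.sqrt (p i) := fun i => Real.sqrt_pos.mpr (hp i)
  have hsne : ∀ i, ((Real.sqrt (p i) : ℝ) : ℂ) ≠ 0 := fun i => by exact_mod_cast (hspos i).ne'
  have hinv : (Matrix.diagonal fun i => ((p i : ℝ) : ℂ))⁻¹
      = Matrix.diagonal fun i => ((p i : ℝ) : ℂ)⁻¹ := by
    apply Matrix.inv_eq_right_inv
    rw [Matrix.diagonal_mul_diagonal]
    have : (fun i => ((p i : ℝ) : ℂ) * ((p i : ℝ) : ℂ)⁻¹) = fun _ => (1:ℂ) :=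
      funext fun i => mul_inv_cancel₀ (hqne i)
    rw [this, Matrix.diagonal_one]
  set Dh : Matrix (Fin d) (Fin d) ℂ :=
    Matrix.diagonal fun i => ((Real.sqrt (p i) : ℝ) : ℂ) with hDh
  set Di : Matrix (Fin d) (Fin d) ℂ :=
    Matrix.diagonal fun i => (((Real.sqrt (p i))⁻¹ : ℝ) : ℂ) with hDi
  set Dq : Matrix (Fin d) (Fin d) ℂ :=
    Matrix.diagonal fun i => ((p i : ℝ) : ℂ) with hDq
  constructor
  · intro hG
    -- entrywise consequence of GNS
    have hrelE : ∀ n m i j, L (Matrix.single n m (1:ℂ)) i j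
        = ((p n : ℝ) : ℂ)⁻¹ * (((p i : ℝ) : ℂ) * Ldag (Matrix.single n m (1:ℂ)) i j) := by
      intro n m i j
      have h1 := hG (Matrix.single n m (1:ℂ))
      rw [hinv, qdb_diag_sbm, _root_.map_smul, mul_smul_comm] at h1
      have h2 := congrArg (fun M : Matrix (Fin d) (Fin d) ℂ => M i j) h1
      simpa [hDq, Matrix.diagonal_mul, smul_eq_mul] using h2
    -- per-basis KMS
    have main : ∀ n m, L (Matrix.single n m (1:ℂ))
        = Dh * Ldag (Di * Matrix.single n m (1:ℂ) * Di) * Dh := by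
      intro n m
      rw [hDi, qdb_diag_sbm_diag, _root_.map_smul, mul_smul_comm, smul_mul_assoc]
      ext i j
      have entry : (Dh * Ldag (Matrix.single n m (1:ℂ)) * Dh) i j
          = ((Real.sqrt (p i) : ℝ) : ℂ) * Ldag (Matrix.single n m (1:ℂ)) i j
            * ((Real.sqrt (p j) : ℝ) : ℂ) := by
        simp [hDh, Matrix.diagonal_mul, Matrix.mul_diagonal]
      rw [Matrix.smul_apply, entry, smul_eq_mul]
      rcases eq_or_ne (L (Matrix.single n m (1:ℂ)) i j) 0 with hz | hz
      · have hLd0 : Ldag (Matrix.single n m (1:ℂ)) i j = 0 := by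
          by_contra hcon
          have hne' : L (Matrix.single n m (1:ℂ)) i j ≠ 0 := by
            rw [hrelE n m i j]
            exact mul_ne_zero (inv_ne_zero (hqne n)) (mul_ne_zero (hqne i) hcon)
          exact hne' hz
        rw [hz, hLd0]
        ring
      · have hrel := qdb_tts_support p hp L Om hOm hTTS n m i j hz
        have hsC : ((Real.sqrt (p i) : ℝ) : ℂ) * ((Real.sqrt (p j) : ℝ) : ℂ) * ((p n : ℝ) : ℂ)
            = ((Real.sqrt (p n) : ℝ) : ℂ) * ((Real.sqrt (p m) : ℝ) : ℂ) * ((p i : ℝ) : ℂ) := by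
          exact_mod_cast qdb_sqrt_scalar (hp i) (hp j) (hp n) (hp m) hrel
        rw [hrelE n m i j]
        push_cast
        field_simp [hqne n, hsne n, hsne m]
        linear_combination (-1 : ℂ) * Ldag (Matrix.single n m (1:ℂ)) i j * hsC
    intro X
    have := qdb_ext_of_basis L
      ((LinearMap.mulLeft ℂ Dh) ∘ₗ (LinearMap.mulRight ℂ Dh) ∘ₗ Ldag ∘ₗ
        (LinearMap.mulLeft ℂ Di) ∘ₗ (LinearMap.mulRight ℂ Di))
      (fun n m => by
        simpa [LinearMap.comp_apply, LinearMap.mulLeft_apply, LinearMap.mulRight_apply,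
          mul_assoc] using main n m) X
    simpa [LinearMap.comp_apply, LinearMap.mulLeft_apply, LinearMap.mulRight_apply,
      mul_assoc] using this
  · intro hK
    -- entrywise consequence of KMS
    have hrelE : ∀ n m i j, L (Matrix.single n m (1:ℂ)) i j
        = ((Real.sqrt (p n) : ℝ) : ℂ)⁻¹ * ((Real.sqrt (p m) : ℝ) : ℂ)⁻¹
          * (((Real.sqrt (p i) : ℝ) : ℂ) * Ldag (Matrix.single n m (1:ℂ)) i j
            * ((Real.sqrt (p j) : ℝ) : ℂ)) := by
      intro n m i j
      have h1 := hK (Matrix.single n m (1:ℂ))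
      rw [hDi, qdb_diag_sbm_diag, _root_.map_smul, mul_smul_comm, smul_mul_assoc] at h1
      have h2 := congrArg (fun M : Matrix (Fin d) (Fin d) ℂ => M i j) h1
      simp only [hDh, Matrix.smul_apply, Matrix.diagonal_mul, Matrix.mul_diagonal,
        smul_eq_mul] at h2
      rw [h2]
      push_cast
      ring
    -- per-basis GNS
    have main : ∀ n m, L (Matrix.single n m (1:ℂ))
        = Dq * Ldag (Dq⁻¹ * Matrix.single n m (1:ℂ)) := by
      intro n m
      rw [hDq, hinv, qdb_diag_sbm, _root_.map_smul, mul_smul_comm]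
      ext i j
      have entry : ((Matrix.diagonal fun i => ((p i : ℝ) : ℂ))
          * Ldag (Matrix.single n m (1:ℂ))) i j
          = ((p i : ℝ) : ℂ) * Ldag (Matrix.single n m (1:ℂ)) i j := by
        simp [Matrix.diagonal_mul]
      rw [Matrix.smul_apply, entry, smul_eq_mul]
      rcases eq_or_ne (Ldag (Matrix.single n m (1:ℂ)) i j) 0 with hz | hz
      · rw [hz, hrelE n m i j, hz]
        ring
      · have hLne : L (Matrix.single n m (1:ℂ)) i j ≠ 0 := by
          rw [hrelE n m i j]
          exact mul_ne_zero (mul_ne_zero (inv_ne_zero (hsne n)) (inv_ne_zero (hsne m)))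
            (mul_ne_zero (mul_ne_zero (hsne i) hz) (hsne j))
        have hrel := qdb_tts_support p hp L Om hOm hTTS n m i j hLne
        have hsC : ((Real.sqrt (p i) : ℝ) : ℂ) * ((Real.sqrt (p j) : ℝ) : ℂ) * ((p n : ℝ) : ℂ)
            = ((Real.sqrt (p n) : ℝ) : ℂ) * ((Real.sqrt (p m) : ℝ) : ℂ) * ((p i : ℝ) : ℂ) := by
          exact_mod_cast qdb_sqrt_scalar (hp i) (hp j) (hp n) (hp m) hrel
        rw [hrelE n m i j]
        field_simp [hqne n, hsne n, hsne m]
        linear_combination hsC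
    intro X
    have := qdb_ext_of_basis L
      ((LinearMap.mulLeft ℂ Dq) ∘ₗ Ldag ∘ₗ (LinearMap.mulLeft ℂ Dq⁻¹))
      (fun n m => by
        simpa [LinearMap.comp_apply, LinearMap.mulLeft_apply] using main n m) X
    simpa [LinearMap.comp_apply, LinearMap.mulLeft_apply] using this
end

section
/- Let ρ and σ be density matrices on a finite-dimensional Hilbert space with σ positive definite. Then D(ρ‖σ) ≥ −2 log F(ρ, σ), where F(ρ,σ) = Tr[√(√σ ρ √σ)] is the quantum fidelity and D the quantum relative entropy (with D(ρ‖σ) = +∞ if supp ρ ⊄ supp σ, which does not occur here). -/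
open Matrix
open scoped ComplexOrder

variable {d : ℕ}

namespace QRel

noncomputable def evU {A : Matrix (Fin d) (Fin d) ℂ} (hA : A.IsHermitian) :
    Matrix (Fin d) (Fin d) ℂ := (IsHermitian.eigenvectorUnitary hA : Matrix (Fin d) (Fin d) ℂ)

lemma evU_star_mul {A : Matrix (Fin d) (Fin d) ℂ} (hA : A.IsHermitian) :
    star (evU hA) * evU hA = 1 :=
  Unitary.star_mul_self_of_mem (SetLike.coe_mem _)

lemma evU_mul_star {A : Matrix (Fin d) (Fin d) ℂ} (hA : A.IsHermitian) :
    evU hA * star (evU hA) = 1 :=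
  Unitary.mul_star_self_of_mem (SetLike.coe_mem _)

lemma cfc_def {A : Matrix (Fin d) (Fin d) ℂ} (hA : A.IsHermitian) (f : ℝ → ℝ) :
    hA.cfc f = evU hA * diagonal (fun i => (f (hA.eigenvalues i) : ℂ)) * star (evU hA) := rfl

lemma spectral {A : Matrix (Fin d) (Fin d) ℂ} (hA : A.IsHermitian) :
    A = evU hA * diagonal (fun i => ((hA.eigenvalues i : ℝ) : ℂ)) * star (evU hA) :=
  hA.spectral_theorem

lemma trace_cfc {A : Matrix (Fin d) (Fin d) ℂ} (hA : A.IsHermitian) (f : ℝ → ℝ) :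
    (hA.cfc f).trace = ((∑ i, f (hA.eigenvalues i) : ℝ) : ℂ) := by
  rw [cfc_def, trace_mul_cycle, evU_star_mul, one_mul, trace_diagonal]
  push_cast
  rfl

lemma cfc_isHermitian {A : Matrix (Fin d) (Fin d) ℂ} (hA : A.IsHermitian) (f : ℝ → ℝ) :
    (hA.cfc f).IsHermitian := by
  rw [← hA.cfc_eq]
  exact cfc_predicate _ _

lemma cfc_congr_fun {A : Matrix (Fin d) (Fin d) ℂ} (hA : A.IsHermitian) {f g : ℝ → ℝ}
    (h : ∀ i, f (hA.eigenvalues i) = g (hA.eigenvalues i)) : hA.cfc f = hA.cfc g := by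
  rw [cfc_def, cfc_def]
  congr 2
  exact congrArg _ (funext fun i => congrArg _ (h i))

lemma cfc_mul {A : Matrix (Fin d) (Fin d) ℂ} (hA : A.IsHermitian) (f g : ℝ → ℝ) :
    hA.cfc f * hA.cfc g = hA.cfc (fun x => f x * g x) := by
  rw [cfc_def, cfc_def, cfc_def]
  have : evU hA * diagonal (fun i => (f (hA.eigenvalues i) : ℂ)) * star (evU hA) *
      (evU hA * diagonal (fun i => (g (hA.eigenvalues i) : ℂ)) * star (evU hA))
      = evU hA * (diagonal (fun i => (f (hA.eigenvalues i) : ℂ)) * (star (evU hA) * evU hA) *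
        diagonal (fun i => (g (hA.eigenvalues i) : ℂ))) * star (evU hA) := by
    simp only [mul_assoc]
  rw [this, evU_star_mul, mul_one, diagonal_mul_diagonal]
  push_cast
  rfl

lemma cfc_sqrt_mul_self {A : Matrix (Fin d) (Fin d) ℂ} (hA : A.PosSemidef) :
    hA.1.cfc Real.sqrt * hA.1.cfc Real.sqrt = A := by
  rw [cfc_mul, cfc_congr_fun hA.1 (g := fun x => x)
    (fun i => Real.mul_self_sqrt (hA.eigenvalues_nonneg i)), cfc_def]
  exact (spectral hA.1).symm

lemma cfc_id' {A : Matrix (Fin d) (Fin d) ℂ} (hA : A.IsHermitian) :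
    hA.cfc (fun x => x) = A := by
  rw [cfc_def]; exact (spectral hA).symm

lemma cfc_congr_matrix {A B : Matrix (Fin d) (Fin d) ℂ} (h : A = B) (hA : A.IsHermitian)
    (f : ℝ → ℝ) : hA.cfc f = (h ▸ hA : B.IsHermitian).cfc f := by subst h; rfl

/-- trace of product of two cfc's as a weighted double sum. -/
lemma trace_cfc_mul_cfc {A B : Matrix (Fin d) (Fin d) ℂ} (hA : A.IsHermitian)
    (hB : B.IsHermitian) (f g : ℝ → ℝ) :
    (hA.cfc f * hB.cfc g).trace =
      ((∑ i, ∑ j, Complex.normSq ((star (evU hA) * evU hB) i j) *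
        (f (hA.eigenvalues i) * g (hB.eigenvalues j)) : ℝ) : ℂ) := by
  set M := star (evU hA) * evU hB with hM
  have key : hA.cfc f * hB.cfc g =
      evU hA * (diagonal (fun i => (f (hA.eigenvalues i) : ℂ)) * M *
        diagonal (fun j => (g (hB.eigenvalues j) : ℂ)) * star M) * star (evU hA) := by
    rw [cfc_def, cfc_def, hM]
    simp only [Matrix.star_mul, star_star, mul_assoc, evU_mul_star, mul_one]
  rw [key, trace_mul_cycle, evU_star_mul, one_mul]
  simp only [Matrix.trace, Matrix.diag]
  push_cast
  refine Finset.sum_congr rfl fun i _ => ?_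
  rw [Matrix.mul_apply]
  refine Finset.sum_congr rfl fun j _ => ?_
  rw [Matrix.mul_diagonal, Matrix.diagonal_mul, Matrix.star_apply,
    show ((f (hA.eigenvalues i) : ℂ)) * M i j * (g (hB.eigenvalues j) : ℂ) * star (M i j)
      = (M i j * star (M i j)) * ((f (hA.eigenvalues i) : ℂ) * (g (hB.eigenvalues j) : ℂ))
      from by ring, Complex.star_def, Complex.mul_conj]

lemma evU_mul_star_assoc {A : Matrix (Fin d) (Fin d) ℂ} (hA : A.IsHermitian)
    (B : Matrix (Fin d) (Fin d) ℂ) : evU hA * (star (evU hA) * B) = B := by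
  rw [← mul_assoc, evU_mul_star, one_mul]

lemma evU_star_mul_assoc {A : Matrix (Fin d) (Fin d) ℂ} (hA : A.IsHermitian)
    (B : Matrix (Fin d) (Fin d) ℂ) : star (evU hA) * (evU hA * B) = B := by
  rw [← mul_assoc, evU_star_mul, one_mul]

set_option maxHeartbeats 1000000 in
/-- `Re (Tr X) ≤ Tr √(XᴴX)`. -/
lemma re_trace_le_trace_cfc_sqrt (X : Matrix (Fin d) (Fin d) ℂ)
    (hH : (Xᴴ * X).IsHermitian) :
    X.trace.re ≤ ((hH.cfc Real.sqrt).trace).re := by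
  set Y := star (evU hH) * X * (evU hH) with hY
  set e := hH.eigenvalues with he
  have he0 : ∀ i, 0 ≤ e i := fun i => (posSemidef_conjTranspose_mul_self X).eigenvalues_nonneg i
  have htr : Y.trace = X.trace := by
    rw [hY, trace_mul_cycle, evU_mul_star, one_mul]
  have hdiag : star Y * Y = diagonal (fun i => ((e i : ℝ) : ℂ)) := by
    have h1 : star Y * Y = star (evU hH) * (Xᴴ * X) * evU hH := by
      rw [hY]
      simp only [Matrix.star_mul, star_star, mul_assoc, ← Matrix.star_eq_conjTranspose,
        evU_mul_star_assoc]
    rw [h1]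
    have h3 := hH.conjStarAlgAut_star_eigenvectorUnitary
    rw [Unitary.conjStarAlgAut_star_apply] at h3
    exact h3
  have hcol : ∀ i, (e i : ℝ) = ∑ k, Complex.normSq (Y k i) := by
    intro i
    have h2 : ((star Y * Y) i i) = ((e i : ℝ) : ℂ) := by
      rw [hdiag, Matrix.diagonal_apply_eq]
    rw [Matrix.mul_apply] at h2
    simp only [Matrix.star_apply, Complex.star_def,
      ← Complex.normSq_eq_conj_mul_self] at h2
    exact_mod_cast h2.symm
  have hperterm : ∀ i, (Y i i).re ≤ Real.sqrt (e i) := by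
    intro i
    refine le_trans (Complex.re_le_norm _) ?_
    rw [Real.le_sqrt (norm_nonneg _) (he0 i), Complex.sq_norm, hcol i]
    exact Finset.single_le_sum (f := fun k => Complex.normSq (Y k i)) (fun k _ => Complex.normSq_nonneg _) (Finset.mem_univ i)
  calc X.trace.re = Y.trace.re := by rw [htr]
    _ = ∑ i, (Y i i).re := by rw [Matrix.trace]; exact Complex.re_sum _ _
    _ ≤ ∑ i, Real.sqrt (e i) := Finset.sum_le_sum fun i _ => hperterm i
    _ = ((hH.cfc Real.sqrt).trace).re := by rw [trace_cfc, Complex.ofReal_re]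


lemma classical_bound {ι : Type*} [Fintype ι] [DecidableEq ι] (w a b : ι → ℝ)
    (hw : ∀ i, 0 ≤ w i) (ha : ∀ i, 0 ≤ a i) (hb : ∀ i, 0 < b i)
    (hsum : ∑ i, w i * a i = 1) :
    -2 * Real.log (∑ i, w i * (Real.sqrt (a i) * Real.sqrt (b i)))
      ≤ ∑ i, w i * (a i * (Real.log (a i) - Real.log (b i))) := by
  classical
  set S : Finset ι := Finset.univ.filter (fun i => 0 < w i * a i) with hS
  have hmemS : ∀ i ∈ S, 0 < w i ∧ 0 < a i := by
    intro i hi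
    rw [hS, Finset.mem_filter] at hi
    have h := hi.2
    constructor
    · rcases (hw i).eq_or_lt with h0 | h0
      · exfalso; rw [← h0, zero_mul] at h; exact lt_irrefl 0 h
      · exact h0
    · rcases (ha i).eq_or_lt with h0 | h0
      · exfalso; rw [← h0, mul_zero] at h; exact lt_irrefl 0 h
      · exact h0
  have hzero : ∀ i ∈ Finset.univ, i ∉ S → w i * a i = 0 := by
    intro i _ hi
    rw [hS, Finset.mem_filter] at hi
    push_neg at hi
    exact le_antisymm (hi (Finset.mem_univ i)) (mul_nonneg (hw i) (ha i))
  have hsumS : ∑ i ∈ S, w i * a i = 1 := by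
    rw [← hsum]
    exact Finset.sum_subset (Finset.filter_subset _ _) hzero
  set T := ∑ i, w i * (Real.sqrt (a i) * Real.sqrt (b i)) with hT
  set T' := ∑ i ∈ S, w i * (Real.sqrt (a i) * Real.sqrt (b i)) with hT'
  have hSne : S.Nonempty := by
    rcases Finset.eq_empty_or_nonempty S with h | h
    · exfalso; rw [h, Finset.sum_empty] at hsumS; norm_num at hsumS
    · exact h
  have hT'pos : 0 < T' := by
    refine Finset.sum_pos (fun i hi => ?_) hSne
    obtain ⟨hwi, hai⟩ := hmemS i hi
    exact mul_pos hwi (mul_pos (Real.sqrt_pos.2 hai) (Real.sqrt_pos.2 (hb i)))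
  have hT'T : T' ≤ T :=
    Finset.sum_le_sum_of_subset_of_nonneg (Finset.filter_subset _ _)
      (fun i _ _ => mul_nonneg (hw i) (mul_nonneg (Real.sqrt_nonneg _) (Real.sqrt_nonneg _)))
  have hTpos : 0 < T := lt_of_lt_of_le hT'pos hT'T
  have hRHS : ∑ i, w i * (a i * (Real.log (a i) - Real.log (b i)))
      = ∑ i ∈ S, w i * (a i * (Real.log (a i) - Real.log (b i))) := by
    refine (Finset.sum_subset (Finset.filter_subset _ _) ?_).symm
    intro i hi hni
    have h0 := hzero i hi hni
    rw [show w i * (a i * (Real.log (a i) - Real.log (b i)))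
        = (w i * a i) * (Real.log (a i) - Real.log (b i)) from by ring, h0, zero_mul]
  have key : ∀ i ∈ S, w i * (a i * (Real.log (b i) - Real.log (a i) - 2 * Real.log T'))
      ≤ 2 * (w i * (Real.sqrt (a i) * Real.sqrt (b i)) / T' - w i * a i) := by
    intro i hi
    obtain ⟨hwi, hai⟩ := hmemS i hi
    have hsa : 0 < Real.sqrt (a i) := Real.sqrt_pos.2 hai
    have hsb : 0 < Real.sqrt (b i) := Real.sqrt_pos.2 (hb i)
    set x := Real.sqrt (b i) / (Real.sqrt (a i) * T') with hx
    have hxpos : 0 < x := div_pos hsb (mul_pos hsa hT'pos)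
    have hlogx : Real.log x = (Real.log (b i) - Real.log (a i) - 2 * Real.log T') / 2 := by
      rw [hx, Real.log_div (ne_of_gt hsb) (ne_of_gt (mul_pos hsa hT'pos)),
        Real.log_mul (ne_of_gt hsa) (ne_of_gt hT'pos),
        Real.log_sqrt (ha i), Real.log_sqrt (le_of_lt (hb i))]
      ring
    have hle : Real.log x ≤ x - 1 := Real.log_le_sub_one_of_pos hxpos
    have hwa : 0 ≤ w i * a i := mul_nonneg (hw i) (ha i)
    have h1 : w i * a i * Real.log x ≤ w i * a i * (x - 1) :=
      mul_le_mul_of_nonneg_left hle hwa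
    have hx2 : w i * a i * x = w i * (Real.sqrt (a i) * Real.sqrt (b i)) / T' := by
      rw [hx]
      field_simp
      linear_combination (-1 : ℝ) * Real.sq_sqrt (ha i)
    calc w i * (a i * (Real.log (b i) - Real.log (a i) - 2 * Real.log T'))
        = 2 * (w i * a i * Real.log x) := by rw [hlogx]; ring
      _ ≤ 2 * (w i * a i * (x - 1)) := by linarith
      _ = 2 * (w i * a i * x - w i * a i) := by ring
      _ = 2 * (w i * (Real.sqrt (a i) * Real.sqrt (b i)) / T' - w i * a i) := by rw [hx2]
  have hkeysum : ∑ i ∈ S, w i * (a i * (Real.log (b i) - Real.log (a i) - 2 * Real.log T')) ≤ 0 := by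
    calc ∑ i ∈ S, w i * (a i * (Real.log (b i) - Real.log (a i) - 2 * Real.log T'))
        ≤ ∑ i ∈ S, 2 * (w i * (Real.sqrt (a i) * Real.sqrt (b i)) / T' - w i * a i) :=
          Finset.sum_le_sum key
      _ = 2 * ((∑ i ∈ S, w i * (Real.sqrt (a i) * Real.sqrt (b i))) / T'
            - ∑ i ∈ S, w i * a i) := by
          rw [← Finset.mul_sum, Finset.sum_sub_distrib, ← Finset.sum_div]
      _ = 0 := by rw [← hT', div_self (ne_of_gt hT'pos), hsumS]; ring
  have hexpand : ∑ i ∈ S, w i * (a i * (Real.log (b i) - Real.log (a i) - 2 * Real.log T'))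
      = (∑ i ∈ S, w i * (a i * (Real.log (b i) - Real.log (a i))))
        - 2 * Real.log T' * ∑ i ∈ S, w i * a i := by
    rw [Finset.mul_sum, ← Finset.sum_sub_distrib]
    refine Finset.sum_congr rfl fun i _ => by ring
  have hflip : ∑ i ∈ S, w i * (a i * (Real.log (b i) - Real.log (a i)))
      = -∑ i ∈ S, w i * (a i * (Real.log (a i) - Real.log (b i))) := by
    rw [← Finset.sum_neg_distrib]
    refine Finset.sum_congr rfl fun i _ => by ring
  rw [hexpand, hsumS, hflip] at hkeysum
  have hlogTT' : Real.log T' ≤ Real.log T := Real.log_le_log hT'pos hT'T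
  rw [hRHS]
  linarith

end QRel

lemma cfc_congr_matrix' {d : ℕ} {A B : Matrix (Fin d) (Fin d) ℂ} (h : A = B)
    (hA : A.IsHermitian) (hB : B.IsHermitian) (f : ℝ → ℝ) : hA.cfc f = hB.cfc f := by
  subst h; rfl

open QRel in
set_option maxHeartbeats 1000000 in
/-- For density matrices `ρ`, `σ` with `σ` positive definite,
`D(ρ‖σ) ≥ −2 log F(ρ,σ)`, where `F(ρ,σ) = Tr[√(√σ ρ √σ)]` is the quantum fidelity.
Here `Tr[ρ log ρ]` is computed via the functional calculus of `x ↦ x log x` (so the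
convention `0 log 0 = 0` handles zero eigenvalues of `ρ`). -/
theorem relEntropy_ge_neg_two_log_fidelity {d : ℕ}
    (ρ σ : Matrix (Fin d) (Fin d) ℂ)
    (hρ : ρ.PosSemidef) (hρtr : ρ.trace = 1)
    (hσ : σ.PosDef) (hσtr : σ.trace = 1)
    (hinner : (hσ.1.cfc Real.sqrt * ρ * hσ.1.cfc Real.sqrt).IsHermitian) :
    ((hρ.1.cfc fun x => x * Real.log x).trace - (ρ * hσ.1.cfc Real.log).trace).re
      ≥ -2 * Real.log (((hinner.cfc Real.sqrt).trace).re) := by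
  classical
  have ha0 : ∀ i, 0 ≤ hρ.1.eigenvalues i := hρ.eigenvalues_nonneg
  have hb0 : ∀ j, 0 < hσ.1.eigenvalues j := hσ.eigenvalues_pos
  -- row sums of the unitary overlap matrix
  have hrow : ∀ i, ∑ j, Complex.normSq ((star (evU hρ.1) * evU hσ.1) i j) = 1 := by
    intro i
    have hMM : (star (evU hρ.1) * evU hσ.1) * star (star (evU hρ.1) * evU hσ.1) = 1 := by
      simp only [Matrix.star_mul, star_star, mul_assoc, evU_mul_star_assoc, evU_star_mul]
    have h1 : ((star (evU hρ.1) * evU hσ.1) * star (star (evU hρ.1) * evU hσ.1)) i i = 1 := by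
      rw [hMM, Matrix.one_apply_eq]
    rw [Matrix.mul_apply] at h1
    simp only [Matrix.star_apply, Complex.star_def, Complex.mul_conj] at h1
    exact_mod_cast h1
  -- trace of ρ as sum of eigenvalues
  have htrρ : ∑ i, hρ.1.eigenvalues i = 1 := by
    have h := QRel.trace_cfc hρ.1 (fun x => x)
    rw [QRel.cfc_id' hρ.1, hρtr] at h
    exact_mod_cast h.symm
  -- sum of weights * a = 1
  have hsum_wa : ∑ i, ∑ j, Complex.normSq ((star (evU hρ.1) * evU hσ.1) i j)
      * hρ.1.eigenvalues i = 1 := by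
    calc ∑ i, ∑ j, Complex.normSq ((star (evU hρ.1) * evU hσ.1) i j) * hρ.1.eigenvalues i
        = ∑ i, (∑ j, Complex.normSq ((star (evU hρ.1) * evU hσ.1) i j)) * hρ.1.eigenvalues i := by
          refine Finset.sum_congr rfl fun i _ => ?_
          rw [Finset.sum_mul]
      _ = ∑ i, hρ.1.eigenvalues i := by
          refine Finset.sum_congr rfl fun i _ => by rw [hrow i, one_mul]
      _ = 1 := htrρ
  -- the X matrix and its polar-type inequality
  have hXX : (hρ.1.cfc Real.sqrt * hσ.1.cfc Real.sqrt)ᴴ * (hρ.1.cfc Real.sqrt * hσ.1.cfc Real.sqrt)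
      = hσ.1.cfc Real.sqrt * ρ * hσ.1.cfc Real.sqrt := by
    rw [conjTranspose_mul, (QRel.cfc_isHermitian hσ.1 Real.sqrt),
      (QRel.cfc_isHermitian hρ.1 Real.sqrt)]
    calc hσ.1.cfc Real.sqrt * hρ.1.cfc Real.sqrt * (hρ.1.cfc Real.sqrt * hσ.1.cfc Real.sqrt)
        = hσ.1.cfc Real.sqrt * (hρ.1.cfc Real.sqrt * hρ.1.cfc Real.sqrt) * hσ.1.cfc Real.sqrt := by
          simp only [mul_assoc]
      _ = hσ.1.cfc Real.sqrt * ρ * hσ.1.cfc Real.sqrt := by rw [QRel.cfc_sqrt_mul_self hρ]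
  have hH : ((hρ.1.cfc Real.sqrt * hσ.1.cfc Real.sqrt)ᴴ
      * (hρ.1.cfc Real.sqrt * hσ.1.cfc Real.sqrt)).IsHermitian := by rw [hXX]; exact hinner
  -- fidelity lower bound
  have hFge : ∑ i, ∑ j, Complex.normSq ((star (evU hρ.1) * evU hσ.1) i j) *
      (Real.sqrt (hρ.1.eigenvalues i) * Real.sqrt (hσ.1.eigenvalues j))
      ≤ ((hinner.cfc Real.sqrt).trace).re := by
    have h1 := QRel.re_trace_le_trace_cfc_sqrt (hρ.1.cfc Real.sqrt * hσ.1.cfc Real.sqrt) hH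
    have h2 : hH.cfc Real.sqrt = hinner.cfc Real.sqrt :=
      cfc_congr_matrix' hXX hH hinner Real.sqrt
    rw [h2] at h1
    refine le_trans (le_of_eq ?_) h1
    rw [QRel.trace_cfc_mul_cfc hρ.1 hσ.1 Real.sqrt Real.sqrt, Complex.ofReal_re]
  -- positivity of the lower bound
  have hTpos : 0 < ∑ p : Fin d × Fin d, Complex.normSq ((star (evU hρ.1) * evU hσ.1) p.1 p.2) *
      (Real.sqrt (hρ.1.eigenvalues p.1) * Real.sqrt (hσ.1.eigenvalues p.2)) := by
    obtain ⟨p, hp⟩ : ∃ p : Fin d × Fin d,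
        0 < Complex.normSq ((star (evU hρ.1) * evU hσ.1) p.1 p.2) * hρ.1.eigenvalues p.1 := by
      by_contra hcon
      push_neg at hcon
      have h0 : ∑ p : Fin d × Fin d, Complex.normSq ((star (evU hρ.1) * evU hσ.1) p.1 p.2) *
          hρ.1.eigenvalues p.1 ≤ 0 := Finset.sum_nonpos (fun p _ => hcon p)
      rw [Fintype.sum_prod_type, hsum_wa] at h0
      linarith
    have hwp : 0 < Complex.normSq ((star (evU hρ.1) * evU hσ.1) p.1 p.2) := by
      rcases (Complex.normSq_nonneg ((star (evU hρ.1) * evU hσ.1) p.1 p.2)).eq_or_lt with h | h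
      · exfalso; rw [← h, zero_mul] at hp; exact lt_irrefl 0 hp
      · exact h
    have hap : 0 < hρ.1.eigenvalues p.1 := by
      rcases (ha0 p.1).eq_or_lt with h | h
      · exfalso; rw [← h, mul_zero] at hp; exact lt_irrefl 0 hp
      · exact h
    refine Finset.sum_pos' (fun q _ => mul_nonneg (Complex.normSq_nonneg _)
      (mul_nonneg (Real.sqrt_nonneg _) (Real.sqrt_nonneg _))) ⟨p, Finset.mem_univ p, ?_⟩
    exact mul_pos hwp (mul_pos (Real.sqrt_pos.2 hap) (Real.sqrt_pos.2 (hb0 p.2)))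
  -- the classical bound
  have hclass := QRel.classical_bound (ι := Fin d × Fin d)
    (fun p => Complex.normSq ((star (evU hρ.1) * evU hσ.1) p.1 p.2))
    (fun p => hρ.1.eigenvalues p.1) (fun p => hσ.1.eigenvalues p.2)
    (fun p => Complex.normSq_nonneg _) (fun p => ha0 p.1) (fun p => hb0 p.2)
    (by rw [Fintype.sum_prod_type]; exact hsum_wa)
  -- compute LHS
  have hT1 : ((hρ.1.cfc fun x => x * Real.log x).trace).re
      = ∑ i, hρ.1.eigenvalues i * Real.log (hρ.1.eigenvalues i) := by
    rw [QRel.trace_cfc, Complex.ofReal_re]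
  have hT2 : ((ρ * hσ.1.cfc Real.log).trace).re
      = ∑ i, ∑ j, Complex.normSq ((star (evU hρ.1) * evU hσ.1) i j) *
        (hρ.1.eigenvalues i * Real.log (hσ.1.eigenvalues j)) := by
    conv_lhs => rw [← QRel.cfc_id' hρ.1]
    rw [QRel.trace_cfc_mul_cfc hρ.1 hσ.1 (fun x => x) Real.log, Complex.ofReal_re]
  have hLHS : ((hρ.1.cfc fun x => x * Real.log x).trace - (ρ * hσ.1.cfc Real.log).trace).re
      = ∑ p : Fin d × Fin d, Complex.normSq ((star (evU hρ.1) * evU hσ.1) p.1 p.2) *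
        (hρ.1.eigenvalues p.1 *
          (Real.log (hρ.1.eigenvalues p.1) - Real.log (hσ.1.eigenvalues p.2))) := by
    rw [Complex.sub_re, hT1, hT2, Fintype.sum_prod_type]
    rw [show ∑ i, hρ.1.eigenvalues i * Real.log (hρ.1.eigenvalues i)
        = ∑ i, ∑ j, Complex.normSq ((star (evU hρ.1) * evU hσ.1) i j) *
          (hρ.1.eigenvalues i * Real.log (hρ.1.eigenvalues i)) from ?_]
    · rw [← Finset.sum_sub_distrib]
      refine Finset.sum_congr rfl fun i _ => ?_
      rw [← Finset.sum_sub_distrib]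
      refine Finset.sum_congr rfl fun j _ => by ring
    · refine Finset.sum_congr rfl fun i _ => ?_
      rw [← Finset.sum_mul, hrow i, one_mul]
  -- conclude
  rw [ge_iff_le, hLHS]
  refine le_trans ?_ hclass
  have hTF : (∑ p : Fin d × Fin d, Complex.normSq ((star (evU hρ.1) * evU hσ.1) p.1 p.2) *
      (Real.sqrt (hρ.1.eigenvalues p.1) * Real.sqrt (hσ.1.eigenvalues p.2)))
      ≤ ((hinner.cfc Real.sqrt).trace).re := by
    rw [Fintype.sum_prod_type]; exact hFge
  have hlog := Real.log_le_log hTpos hTF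
  linarith
end
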